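/- arXiv:1701.02400 — 5 statements merged into one kernel-verified Lean document; each statement's English description precedes it below -/
import Mathlib

section
/- Let μ be a quasi-infinitely divisible distribution with characteristic exponent Ψ_μ (the unique continuous function with Ψ_μ(0)=0 and μ̂ = exp Ψ_μ) and Gaussian variance a = ζ({0}). Then a = -2 lim_{|z|→∞} z^{-2} Ψ_μ(z), and in particular a ≥ 0. -/
open MeasureTheory Complex Filter

noncomputable section

/-- Characteristic function of a measure on ℝ. -/
def charFn (μ : Measure ℝ) (z : ℝ) : ℂ := ∫ x, Complex.exp (Complex.I * z * x) ∂μ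

/-- A representation function: bounded, Borel measurable, with (c x - x)/x² → 0 as x → 0. -/
def IsRepFn (c : ℝ → ℝ) : Prop :=
  Measurable c ∧ (∃ M : ℝ, ∀ x, |c x| ≤ M) ∧
    Tendsto (fun x => (c x - x) / x ^ 2) (nhdsWithin 0 {(0:ℝ)}ᶜ) (nhds 0)

/-- The kernel g_c(x,z). -/
def gKer (c : ℝ → ℝ) (x z : ℝ) : ℂ :=
  if x = 0 then -(z:ℂ)^2 / 2
  else (Complex.exp (Complex.I * z * x) - 1 - Complex.I * z * c x) / ((min 1 (x^2) : ℝ) : ℂ)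

/-- Quasi-infinitely divisible w.r.t. c: the characteristic function has a
Lévy–Khintchine type representation with a finite signed measure ζ = ζp - ζm
(given by its Jordan decomposition). -/
def IsQID (c : ℝ → ℝ) (μ : Measure ℝ) : Prop :=
  ∃ γ : ℝ, ∃ ζp ζm : Measure ℝ, IsFiniteMeasure ζp ∧ IsFiniteMeasure ζm ∧
    Measure.MutuallySingular ζp ζm ∧
    ∀ z : ℝ, charFn μ z =
      Complex.exp (Complex.I * γ * z + (∫ x, gKer c x z ∂ζp) - ∫ x, gKer c x z ∂ζm)

/-- Infinitely divisible w.r.t. c: as above with a (positive) finite measure ζ. -/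
def IsID (c : ℝ → ℝ) (μ : Measure ℝ) : Prop :=
  ∃ γ : ℝ, ∃ ζ : Measure ℝ, IsFiniteMeasure ζ ∧
    ∀ z : ℝ, charFn μ z = Complex.exp (Complex.I * γ * z + ∫ x, gKer c x z ∂ζ)

/-- The Lévy–Khintchine integral ∫ (e^{izx} - 1 - izc(x)) dν. -/
def lkInt (c : ℝ → ℝ) (ν : Measure ℝ) (z : ℝ) : ℂ :=
  ∫ x, (Complex.exp (Complex.I * z * x) - 1 - Complex.I * z * c x) ∂ν

/-- μ has characteristic triplet (a, ν, γ) w.r.t. c, where the quasi-Lévy measure ν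
is given by its Jordan decomposition ν = νp - νm. -/
def HasTriplet (c : ℝ → ℝ) (μ : Measure ℝ) (a : ℝ) (νp νm : Measure ℝ) (γ : ℝ) : Prop :=
  Measure.MutuallySingular νp νm ∧ νp {0} = 0 ∧ νm {0} = 0 ∧
  (∫⁻ x, ENNReal.ofReal (min 1 (x^2)) ∂(νp + νm)) < ⊤ ∧
  ∀ z : ℝ, charFn μ z =
    Complex.exp (Complex.I * γ * z - a * z^2 / 2 + lkInt c νp z - lkInt c νm z)

/-- Compatibility: the complex absolute value as an `AbsoluteValue`. -/
def Complex.abs : AbsoluteValue ℂ ℝ := NormedField.toAbsoluteValue ℂ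

lemma Complex.norm_eq_abs (z : ℂ) : ‖z‖ = Complex.abs z := rfl

lemma Complex.abs_exp (z : ℂ) : Complex.abs (Complex.exp z) = Real.exp z.re :=
  Complex.norm_exp z

@[simp] lemma Complex.abs_ofReal (r : ℝ) : Complex.abs (r : ℂ) = |r| := Complex.norm_real r

@[simp] lemma Complex.abs_I : Complex.abs Complex.I = 1 := Complex.norm_I

@[simp] lemma Complex.abs_two : Complex.abs 2 = 2 := Complex.norm_two

@[simp] lemma Complex.abs_intCast (n : ℤ) : Complex.abs (n : ℂ) = |(n : ℝ)| := Complex.norm_intCast n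

lemma Complex.abs_of_nonneg {r : ℝ} (h : 0 ≤ r) : Complex.abs (r : ℂ) = r := Complex.norm_of_nonneg h

lemma Complex.abs_exp_sub_one_sub_id_le {x : ℂ} (hx : Complex.abs x ≤ 1) :
    Complex.abs (Complex.exp x - 1 - x) ≤ Complex.abs x ^ 2 :=
  Complex.norm_exp_sub_one_sub_id_le hx

lemma abs_exp_I_zx (z x : ℝ) : Complex.abs (Complex.exp (Complex.I * z * x)) = 1 := by
  rw [Complex.abs_exp]; simp [Complex.mul_re]

lemma gKer_num_abs_le {c : ℝ → ℝ} {M : ℝ} (hM : ∀ x, |c x| ≤ M) (x z : ℝ) :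
    Complex.abs (Complex.exp (Complex.I * z * x) - 1 - Complex.I * z * c x) ≤ 2 + M * |z| := by
  have h1 := abs_exp_I_zx z x
  have h2 : Complex.abs (Complex.I * z * c x) = |z| * |c x| := by
    simp [map_mul, Complex.abs_ofReal]
  have h3 : Complex.abs (Complex.exp (Complex.I * z * x) - 1) ≤ 2 := by
    calc Complex.abs (Complex.exp (Complex.I * z * x) - 1)
        ≤ Complex.abs (Complex.exp (Complex.I * z * x)) + Complex.abs 1 :=
          AbsoluteValue.sub_le_add _ _ _
      _ ≤ 2 := by rw [h1]; norm_num
  calc Complex.abs (Complex.exp (Complex.I * z * x) - 1 - Complex.I * z * c x)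
      ≤ Complex.abs (Complex.exp (Complex.I * z * x) - 1) + Complex.abs (Complex.I * z * c x) :=
        AbsoluteValue.sub_le_add _ _ _
    _ ≤ 2 + M * |z| := by
        rw [h2]; nlinarith [abs_nonneg z, abs_nonneg (c x), hM x]

lemma gKer_bound (c : ℝ → ℝ) (hc : IsRepFn c) :
    ∃ C : ℝ, 1 ≤ C ∧ ∀ x z : ℝ, Complex.abs (gKer c x z) ≤ C * (1 + |z|)^2 := by
  obtain ⟨hm, ⟨M, hM⟩, ht⟩ := hc
  have hM0 : 0 ≤ M := le_trans (abs_nonneg _) (hM 0)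
  obtain ⟨δ, hδ0, hδ⟩ := Metric.tendsto_nhdsWithin_nhds.mp ht 1 one_pos
  set δ' := min δ 1 with hδ'
  have hδ'0 : 0 < δ' := lt_min hδ0 one_pos
  set B := max 1 ((M + 1) / δ' ^ 2) with hB
  have hB1 : 1 ≤ B := le_max_left _ _
  have hBb : ∀ x : ℝ, x ≠ 0 → |x| ≤ 1 → |c x - x| / x ^ 2 ≤ B := by
    intro x hx h1
    by_cases hlt : |x| < δ
    · have := hδ (by simpa using hx) (by simpa [Real.dist_eq] using hlt)
      rw [Real.dist_eq, sub_zero, abs_div, _root_.abs_of_nonneg (sq_nonneg x)] at this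
      linarith
    · push_neg at hlt
      have hδ'x : δ' ≤ |x| := le_trans (min_le_left _ _) hlt
      have hx2 : δ' ^ 2 ≤ x ^ 2 := by
        rw [← _root_.sq_abs x]; exact pow_le_pow_left₀ hδ'0.le hδ'x 2
      have hnum : |c x - x| ≤ M + 1 := by
        calc |c x - x| ≤ |c x| + |x| := _root_.abs_sub _ _
          _ ≤ M + 1 := add_le_add (hM x) h1
      calc |c x - x| / x ^ 2 ≤ (M + 1) / δ' ^ 2 := by
            apply div_le_div₀ (by positivity) hnum (by positivity) hx2
        _ ≤ B := le_max_right _ _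
  refine ⟨B + M + 6, by linarith, fun x z => ?_⟩
  have hz0 : (0:ℝ) ≤ |z| := abs_nonneg z
  by_cases hx : x = 0
  · simp only [gKer, if_pos hx]
    have : Complex.abs (-(z:ℂ)^2/2) = z ^ 2 / 2 := by
      rw [map_div₀, map_neg_eq_map, map_pow, Complex.abs_ofReal, Complex.abs_two, _root_.sq_abs]
    rw [this]
    nlinarith [_root_.sq_abs z]
  · simp only [gKer, if_neg hx]
    by_cases h1 : 1 ≤ |x|
    · have hmin : min 1 (x^2) = 1 := min_eq_left (by nlinarith [_root_.sq_abs x, abs_nonneg x])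
      rw [hmin, map_div₀, Complex.abs_ofReal]
      simp only [abs_one, div_one]
      have := gKer_num_abs_le hM x z
      nlinarith [_root_.sq_abs z]
    · push_neg at h1
      have hx2 : (0:ℝ) < x ^ 2 := by positivity
      have hx21 : x ^ 2 ≤ 1 := by nlinarith [_root_.sq_abs x, abs_nonneg x]
      have hmin : min 1 (x^2) = x ^ 2 := min_eq_right hx21
      rw [hmin, map_div₀, Complex.abs_ofReal, _root_.abs_of_nonneg (sq_nonneg x)]
      -- numerator = A + I z (x - c x)
      have hsplit : Complex.exp (Complex.I * z * x) - 1 - Complex.I * z * c x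
          = (Complex.exp (Complex.I * z * x) - 1 - Complex.I * z * x)
            + Complex.I * z * ((x : ℂ) - c x) := by ring
      have hA : Complex.abs (Complex.exp (Complex.I * z * x) - 1 - Complex.I * z * x)
          ≤ 3 * z ^ 2 * x ^ 2 := by
        have habsw : Complex.abs (Complex.I * z * x) = |z| * |x| := by
          simp [map_mul, Complex.abs_ofReal]
        by_cases hzx : |z| * |x| ≤ 1
        · have := Complex.abs_exp_sub_one_sub_id_le (x := Complex.I * z * x) (by rw [habsw]; exact hzx)
          rw [habsw] at this
          calc Complex.abs (Complex.exp (Complex.I * z * x) - 1 - Complex.I * z * x)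
              ≤ (|z| * |x|) ^ 2 := this
            _ ≤ 3 * z ^ 2 * x ^ 2 := by nlinarith [_root_.sq_abs z, _root_.sq_abs x, sq_nonneg (|z| * |x|)]
        · push_neg at hzx
          have hexp : Complex.abs (Complex.exp (Complex.I * z * x) - 1) ≤ 2 := by
            calc Complex.abs (Complex.exp (Complex.I * z * x) - 1)
                ≤ Complex.abs (Complex.exp (Complex.I * z * x)) + Complex.abs 1 :=
                  AbsoluteValue.sub_le_add _ _ _
              _ ≤ 2 := by rw [abs_exp_I_zx]; norm_num
          calc Complex.abs (Complex.exp (Complex.I * z * x) - 1 - Complex.I * z * x)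
              ≤ Complex.abs (Complex.exp (Complex.I * z * x) - 1) + Complex.abs (Complex.I * z * x) :=
                AbsoluteValue.sub_le_add _ _ _
            _ ≤ 2 + |z| * |x| := by rw [habsw]; linarith
            _ ≤ 3 * z ^ 2 * x ^ 2 := by nlinarith [_root_.sq_abs z, _root_.sq_abs x, abs_nonneg x]
      have hD : Complex.abs (Complex.I * z * ((x:ℂ) - c x)) = |z| * |x - c x| := by
        have : ((x:ℂ) - c x) = ((x - c x : ℝ) : ℂ) := by push_cast; ring
        rw [map_mul, map_mul, Complex.abs_I, this, Complex.abs_ofReal, Complex.abs_ofReal, one_mul]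
      have htot : Complex.abs (Complex.exp (Complex.I * z * x) - 1 - Complex.I * z * c x)
          ≤ 3 * z ^ 2 * x ^ 2 + |z| * |x - c x| := by
        rw [hsplit]
        calc Complex.abs _ ≤ _ + _ := AbsoluteValue.add_le _ _ _
          _ ≤ 3 * z ^ 2 * x ^ 2 + |z| * |x - c x| := by rw [hD]; linarith [hA]
      have hBx : |c x - x| / x ^ 2 ≤ B := hBb x hx h1.le
      have habs : |x - c x| = |c x - x| := abs_sub_comm _ _
      rw [div_le_iff₀ hx2]
      have : |z| * |c x - x| ≤ |z| * (B * x ^ 2) := by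
        apply mul_le_mul_of_nonneg_left _ hz0
        rw [div_le_iff₀ hx2] at hBx; linarith
      calc Complex.abs (Complex.exp (Complex.I * z * x) - 1 - Complex.I * z * c x)
          ≤ 3 * z ^ 2 * x ^ 2 + |z| * |x - c x| := htot
        _ ≤ 3 * z ^ 2 * x ^ 2 + |z| * (B * x ^ 2) := by rw [habs]; linarith
        _ = (3 * z ^ 2 + B * |z|) * x ^ 2 := by ring
        _ ≤ (B + M + 6) * (1 + |z|) ^ 2 * x ^ 2 := by
            apply mul_le_mul_of_nonneg_right _ (sq_nonneg x)
            nlinarith [_root_.sq_abs z, mul_nonneg (le_trans zero_le_one hB1) hz0,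
              mul_nonneg (le_trans zero_le_one hB1) (sq_nonneg z), hM0,
              mul_nonneg hM0 hz0, mul_nonneg hM0 (sq_nonneg z)]

lemma gKer_measurable (c : ℝ → ℝ) (hm : Measurable c) (z : ℝ) :
    Measurable (fun x => gKer c x z) := by
  unfold gKer
  refine Measurable.ite (by simpa using (measurableSet_singleton (0:ℝ))) measurable_const ?_
  apply Measurable.div
  · have h1 : Measurable fun x : ℝ => Complex.exp (Complex.I * z * x) :=
      (Complex.continuous_exp.comp (by continuity)).measurable
    exact (h1.sub measurable_const).sub
      ((Complex.measurable_ofReal.comp hm).const_mul (Complex.I * z))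
  · exact (Complex.continuous_ofReal.comp
      (continuous_const.min (continuous_pow 2))).measurable

lemma gKer_integrable (c : ℝ → ℝ) (hc : IsRepFn c) (ζ : Measure ℝ) [IsFiniteMeasure ζ] (z : ℝ) :
    Integrable (fun x => gKer c x z) ζ := by
  obtain ⟨C, hC1, hCb⟩ := gKer_bound c hc
  exact (integrable_const (C * (1 + |z|)^2)).mono'
    ((gKer_measurable c hc.1 z).aestronglyMeasurable)
    (Filter.Eventually.of_forall fun x => hCb x z)

lemma gKer_cont_z (c : ℝ → ℝ) (x : ℝ) : Continuous fun z : ℝ => gKer c x z := by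
  by_cases hx : x = 0
  · simp only [gKer, if_pos hx]; continuity
  · simp only [gKer, if_neg hx]
    apply Continuous.div_const
    have h1 : Continuous fun z : ℝ => Complex.exp (Complex.I * z * x) :=
      Complex.continuous_exp.comp (by continuity)
    exact (h1.sub continuous_const).sub (by continuity)

lemma gKer_integral_continuous (c : ℝ → ℝ) (hc : IsRepFn c) (ζ : Measure ℝ) [IsFiniteMeasure ζ] :
    Continuous fun z : ℝ => ∫ x, gKer c x z ∂ζ := by
  obtain ⟨C, hC1, hCb⟩ := gKer_bound c hc
  rw [continuous_iff_continuousAt]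
  intro z₀
  apply continuousAt_of_dominated (bound := fun _ => C * (2 + |z₀|)^2)
  · exact Filter.Eventually.of_forall fun z => (gKer_measurable c hc.1 z).aestronglyMeasurable
  · filter_upwards [Metric.ball_mem_nhds z₀ one_pos] with z hz
    apply Filter.Eventually.of_forall
    intro x
    refine le_trans (hCb x z) ?_
    have h1 : |z| ≤ |z₀| + 1 := by
      have := abs_sub_abs_le_abs_sub z z₀
      have h2 : |z - z₀| < 1 := by simpa [Real.dist_eq] using hz
      linarith
    have hC0 : (0:ℝ) ≤ C := by linarith
    apply mul_le_mul_of_nonneg_left _ hC0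
    have : (0:ℝ) ≤ 1 + |z| := by positivity
    nlinarith [abs_nonneg z, abs_nonneg z₀]
  · exact integrable_const _
  · exact Filter.Eventually.of_forall fun x => (gKer_cont_z c x).continuousAt

instance : (cocompact ℝ).IsCountablyGenerated := by
  rw [cocompact_eq_atBot_atTop]; infer_instance

lemma gKer_tail_tendsto (c : ℝ → ℝ) (hc : IsRepFn c) (ζ : Measure ℝ) [IsFiniteMeasure ζ] :
    Tendsto (fun z : ℝ => (∫ x in {(0:ℝ)}ᶜ, gKer c x z ∂ζ) / (z:ℂ)^2)
      (cocompact ℝ) (nhds 0) := by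
  obtain ⟨C, hC1, hCb⟩ := gKer_bound c hc
  obtain ⟨hm, ⟨M, hM⟩, -⟩ := hc
  have hM0 : 0 ≤ M := le_trans (abs_nonneg _) (hM 0)
  have key : Tendsto (fun z : ℝ => ∫ x in {(0:ℝ)}ᶜ, gKer c x z / (z:ℂ)^2 ∂ζ)
      (cocompact ℝ) (nhds 0) := by
    have h0 : (0:ℂ) = ∫ x in {(0:ℝ)}ᶜ, (0:ℂ) ∂ζ := by simp
    rw [h0]
    apply tendsto_integral_filter_of_dominated_convergence (bound := fun _ => 4 * C)
    · exact Filter.Eventually.of_forall fun z =>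
        ((gKer_measurable c hm z).div_const _).aestronglyMeasurable
    · filter_upwards [tendsto_norm_cocompact_atTop.eventually_ge_atTop 1] with z hz
      apply Filter.Eventually.of_forall
      intro x
      have hz1 : 1 ≤ |z| := by simpa [Real.norm_eq_abs] using hz
      have hz2 : (0:ℝ) < z ^ 2 := by nlinarith [_root_.sq_abs z]
      have habs : ‖gKer c x z / (z:ℂ)^2‖ = Complex.abs (gKer c x z) / z ^ 2 := by
        rw [Complex.norm_eq_abs, map_div₀, map_pow, Complex.abs_ofReal, _root_.sq_abs]
      rw [habs, div_le_iff₀ hz2]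
      calc Complex.abs (gKer c x z) ≤ C * (1 + |z|)^2 := hCb x z
        _ ≤ C * (4 * z ^ 2) := by
            apply mul_le_mul_of_nonneg_left _ (by linarith : (0:ℝ) ≤ C)
            nlinarith [_root_.sq_abs z]
        _ = 4 * C * z ^ 2 := by ring
    · exact integrable_const _
    · filter_upwards [ae_restrict_mem (measurableSet_singleton (0:ℝ)).compl] with x hx
      have hx0 : x ≠ 0 := by simpa using hx
      have hK : (0:ℝ) < min 1 (x ^ 2) := lt_min one_pos (by positivity)
      set K := min 1 (x ^ 2) with hKdef
      have hhc : Tendsto (fun t : ℝ => 2 / K / t ^ 2 + M / K / t) atTop (nhds 0) := by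
        have h1 : Tendsto (fun t : ℝ => 2 / K / t ^ 2) atTop (nhds 0) :=
          Tendsto.div_atTop tendsto_const_nhds (tendsto_pow_atTop two_ne_zero)
        have h2 : Tendsto (fun t : ℝ => M / K / t) atTop (nhds 0) :=
          Tendsto.div_atTop tendsto_const_nhds tendsto_id
        simpa using h1.add h2
      have hh : Tendsto (fun t : ℝ => (2 + M * t) / K / t ^ 2) atTop (nhds 0) := by
        apply hhc.congr'
        filter_upwards [eventually_ge_atTop 1] with t ht
        have ht0 : t ≠ 0 := by linarith
        field_simp
      apply squeeze_zero_norm' (a := fun z : ℝ => (2 + M * |z|) / K / z ^ 2)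
      · filter_upwards [tendsto_norm_cocompact_atTop.eventually_ge_atTop 1] with z hz
        have hz1 : 1 ≤ |z| := by simpa [Real.norm_eq_abs] using hz
        have hz2 : (0:ℝ) < z ^ 2 := by nlinarith [_root_.sq_abs z]
        have habs : ‖gKer c x z / (z:ℂ)^2‖ = Complex.abs (gKer c x z) / z ^ 2 := by
          rw [Complex.norm_eq_abs, map_div₀, map_pow, Complex.abs_ofReal, _root_.sq_abs]
        rw [habs]
        have hgk : Complex.abs (gKer c x z) ≤ (2 + M * |z|) / K := by
          simp only [gKer, if_neg hx0]
          rw [map_div₀, Complex.abs_ofReal, _root_.abs_of_nonneg hK.le]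
          gcongr
          exact gKer_num_abs_le hM x z
        gcongr
      · have := hh.comp (tendsto_norm_cocompact_atTop : Tendsto (fun z : ℝ => ‖z‖) (cocompact ℝ) atTop)
        apply this.congr
        intro z
        simp only [Function.comp_apply, Real.norm_eq_abs, _root_.sq_abs]
  refine key.congr fun z => ?_
  rw [integral_div]

/-- the Gaussian variance a = ζ({0}) satisfies
a = -2 lim_{|z|→∞} z⁻² Ψ_μ(z), in particular a ≥ 0. -/
theorem stmt1 (c : ℝ → ℝ) (hc : IsRepFn c) (μ : Measure ℝ) [IsProbabilityMeasure μ]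
    (γ : ℝ) (ζp ζm : Measure ℝ) [IsFiniteMeasure ζp] [IsFiniteMeasure ζm]
    (hsing : Measure.MutuallySingular ζp ζm)
    (hrep : ∀ z : ℝ, charFn μ z =
      Complex.exp (Complex.I * γ * z + (∫ x, gKer c x z ∂ζp) - ∫ x, gKer c x z ∂ζm))
    (Ψ : ℝ → ℂ) (hΨc : Continuous Ψ) (hΨ0 : Ψ 0 = 0)
    (hΨ : ∀ z : ℝ, charFn μ z = Complex.exp (Ψ z)) :
    Tendsto (fun z : ℝ => Ψ z / (z : ℂ) ^ 2) (cocompact ℝ)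
      (nhds (-((((ζp {0}).toReal - (ζm {0}).toReal : ℝ) : ℂ) / 2))) ∧
    0 ≤ (ζp {0}).toReal - (ζm {0}).toReal := by
  set ap := (ζp {0}).toReal with hap
  set am := (ζm {0}).toReal with ham
  set L : ℂ := -(((ap - am : ℝ) : ℂ) / 2) with hL
  set φ : ℝ → ℂ :=
    fun z => Complex.I * γ * z + (∫ x, gKer c x z ∂ζp) - ∫ x, gKer c x z ∂ζm with hφdef
  have hφc : Continuous φ := by
    exact ((by continuity : Continuous fun z : ℝ => Complex.I * γ * z).add
      (gKer_integral_continuous c hc ζp)).sub (gKer_integral_continuous c hc ζm)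
  have hgK0 : ∀ x : ℝ, gKer c x 0 = 0 := by
    intro x
    by_cases hx : x = 0 <;> simp [gKer, hx]
  have hφ0 : φ 0 = 0 := by
    simp only [hφdef]
    simp [hgK0]
  -- Ψ = φ
  have hexp1 : ∀ z, Complex.exp (Ψ z - φ z) = 1 := by
    intro z
    rw [Complex.exp_sub, ← hΨ z, hrep z, div_self (Complex.exp_ne_zero _)]
  have hΨeq : ∀ z, Ψ z = φ z := by
    have hclopen : IsClopen {z : ℝ | Ψ z = φ z} := by
      constructor
      · exact isClosed_eq hΨc hφc
      · rw [isOpen_iff_mem_nhds]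
        intro z₀ hz₀
        have hz₀' : Ψ z₀ - φ z₀ = 0 := by simpa [sub_eq_zero] using hz₀
        have hcont : Tendsto (fun z => Ψ z - φ z) (nhds z₀) (nhds 0) := by
          have := (hΨc.sub hφc).continuousAt (x := z₀)
          rw [ContinuousAt, Pi.sub_apply, hz₀'] at this; exact this
        have hev : ∀ᶠ z in nhds z₀, ‖Ψ z - φ z‖ < 1 := by
          have := hcont.eventually (Metric.ball_mem_nhds (0:ℂ) one_pos)
          filter_upwards [this] with z hz
          simpa [dist_eq_norm] using hz
        filter_upwards [hev] with z hz
        obtain ⟨n, hn⟩ := Complex.exp_eq_one_iff.mp (hexp1 z)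
        rcases eq_or_ne n 0 with h0 | h0
        · have : Ψ z - φ z = 0 := by rw [hn, h0]; simp
          simpa [sub_eq_zero] using this
        · exfalso
          have habs : ‖Ψ z - φ z‖ = |(n:ℝ)| * (2 * Real.pi) := by
            rw [hn]
            rw [Complex.norm_eq_abs, map_mul]
            simp [Complex.abs_intCast, Complex.abs_of_nonneg Real.pi_pos.le,
              _root_.abs_of_nonneg Real.pi_pos.le, mul_comm]
          have h1n : (1:ℝ) ≤ |(n:ℝ)| := by
            rw [← Int.cast_abs]
            exact_mod_cast Int.one_le_abs h0
          have : (1:ℝ) ≤ ‖Ψ z - φ z‖ := by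
            rw [habs]
            nlinarith [Real.pi_gt_three]
          linarith
    have huniv : {z : ℝ | Ψ z = φ z} = Set.univ :=
      hclopen.eq_univ ⟨0, by simp [hΨ0, hφ0]⟩
    intro z
    have : z ∈ {z : ℝ | Ψ z = φ z} := huniv ▸ Set.mem_univ z
    exact this
  -- split integrals
  have hsplit : ∀ (ζ : Measure ℝ) [IsFiniteMeasure ζ], ∀ z : ℝ,
      (∫ x, gKer c x z ∂ζ)
        = (ζ {0}).toReal • (-(z:ℂ)^2/2) + ∫ x in {(0:ℝ)}ᶜ, gKer c x z ∂ζ := by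
    intro ζ _ z
    have h1 := integral_add_compl (measurableSet_singleton (0:ℝ))
      (gKer_integrable c hc ζ z)
    have h2 : ∫ x in {(0:ℝ)}, gKer c x z ∂ζ = (ζ {0}).toReal • gKer c 0 z :=
      integral_singleton _ _
    rw [← h1, h2]
    simp [gKer]
  -- gamma term
  have hγt : Tendsto (fun z : ℝ => Complex.I * γ * z / (z:ℂ)^2) (cocompact ℝ) (nhds 0) := by
    apply squeeze_zero_norm' (a := fun z : ℝ => |γ| / |z|)
    · filter_upwards [tendsto_norm_cocompact_atTop.eventually_ge_atTop 1] with z hz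
      have hz1 : 1 ≤ |z| := by simpa [Real.norm_eq_abs] using hz
      have hz0 : z ≠ 0 := by intro h; rw [h] at hz1; norm_num at hz1
      have : ‖Complex.I * γ * z / (z:ℂ)^2‖ = |γ| * |z| / |z| ^ 2 := by
        rw [Complex.norm_eq_abs, map_div₀, map_pow, map_mul, map_mul, Complex.abs_I,
          Complex.abs_ofReal, Complex.abs_ofReal, one_mul]
      rw [this, pow_two]
      rw [div_le_div_iff₀ (by positivity) (by positivity)]
      ring_nf
      nlinarith [abs_nonneg γ, abs_nonneg z]
    · have h := Tendsto.div_atTop (tendsto_const_nhds (x := |γ|))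
        (tendsto_norm_cocompact_atTop : Tendsto (fun z : ℝ => ‖z‖) (cocompact ℝ) atTop)
      exact h.congr fun z => by rw [Real.norm_eq_abs]
  have hJp := gKer_tail_tendsto c hc ζp
  have hJm := gKer_tail_tendsto c hc ζm
  have hev0 : ∀ᶠ z : ℝ in cocompact ℝ, z ≠ 0 := by
    filter_upwards [tendsto_norm_cocompact_atTop.eventually_ge_atTop 1] with z hz
    intro h
    rw [h] at hz
    norm_num at hz
  have htend : Tendsto (fun z : ℝ => Ψ z / (z : ℂ) ^ 2) (cocompact ℝ) (nhds L) := by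
    have hsum : Tendsto (fun z : ℝ => Complex.I * γ * z / (z:ℂ)^2
        + (L + ((∫ x in {(0:ℝ)}ᶜ, gKer c x z ∂ζp) / (z:ℂ)^2
            - (∫ x in {(0:ℝ)}ᶜ, gKer c x z ∂ζm) / (z:ℂ)^2)))
        (cocompact ℝ) (nhds (0 + (L + (0 - 0)))) :=
      hγt.add (tendsto_const_nhds.add (hJp.sub hJm))
    rw [show (0:ℂ) + (L + (0 - 0)) = L by ring] at hsum
    apply Tendsto.congr' _ hsum
    filter_upwards [hev0] with z hz
    have hzc : (z:ℂ) ≠ 0 := Complex.ofReal_ne_zero.mpr hz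
    rw [hΨeq z]
    simp only [hφdef]
    rw [hsplit ζp z, hsplit ζm z, ← hap, ← ham, hL]
    rw [Complex.real_smul, Complex.real_smul]
    push_cast
    field_simp
    ring
  refine ⟨htend, ?_⟩
  -- nonnegativity
  have hcf : ∀ z : ℝ, Complex.abs (charFn μ z) ≤ 1 := by
    intro z
    unfold charFn
    rw [← Complex.norm_eq_abs]
    calc ‖∫ x, Complex.exp (Complex.I * z * x) ∂μ‖
        ≤ 1 * (μ Set.univ).toReal := by
          apply norm_integral_le_of_norm_le_const
          apply Filter.Eventually.of_forall
          intro x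
          rw [Complex.norm_eq_abs, abs_exp_I_zx]
      _ = 1 := by simp
  have hΨre : ∀ z : ℝ, (Ψ z).re ≤ 0 := by
    intro z
    have h1 : Real.exp ((Ψ z).re) ≤ 1 := by
      rw [← Complex.abs_exp, ← hΨ z]
      exact hcf z
    exact Real.exp_le_one_iff.mp h1
  have hre : Tendsto (fun z : ℝ => (Ψ z / (z:ℂ)^2).re) (cocompact ℝ) (nhds L.re) :=
    (Complex.continuous_re.tendsto L).comp htend
  have hle : L.re ≤ 0 := by
    apply le_of_tendsto hre
    filter_upwards [hev0] with z hz
    have : Ψ z / (z:ℂ)^2 = Ψ z / ((z^2 : ℝ) : ℂ) := by push_cast; ring_nf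
    rw [this, Complex.div_ofReal_re]
    exact div_nonpos_of_nonpos_of_nonneg (hΨre z) (sq_nonneg z)
  have hLre : L.re = -((ap - am)/2) := by
    rw [hL]
    have : -(((ap - am : ℝ) : ℂ) / 2) = ((-((ap - am)/2) : ℝ) : ℂ) := by push_cast; ring
    rw [this, Complex.ofReal_re]
  rw [hLre] at hle
  linarith
end
end

section
/- Let μ be quasi-infinitely divisible with characteristic triplet (a, ν, γ)_c, where ν has Jordan decomposition ν = ν⁺ - ν⁻. Then for all z ∈ ℝ: (a/2)z² + ∫_ℝ (1 - cos(zx)) ν⁺(dx) ≥ ∫_ℝ (1 - cos(zx)) ν⁻(dx). -/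
open MeasureTheory Complex Filter

noncomputable section

section Aux

lemma one_sub_cos_le_half_sq (t : ℝ) : 1 - Real.cos t ≤ t ^ 2 / 2 := by
  have h : Real.cos (t/2) ^ 2 = 1 / 2 + Real.cos (2 * (t/2)) / 2 := Real.cos_sq (t/2)
  have h2 : |Real.sin (t/2)| ≤ |t/2| := Real.abs_sin_le_abs
  have h4 : Real.sin (t/2) ^ 2 ≤ (t/2) ^ 2 := by
    have := pow_le_pow_left₀ (abs_nonneg _) h2 2
    simpa [sq_abs] using this
  have h3 := Real.sin_sq_add_cos_sq (t/2)
  have ht : 2 * (t/2) = t := by ring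
  rw [ht] at h
  nlinarith

lemma one_sub_cos_le_min (z x : ℝ) : 1 - Real.cos (z * x) ≤ (2 + z ^ 2) * min 1 (x ^ 2) := by
  rcases le_total 1 (x ^ 2) with hx | hx
  · rw [min_eq_left hx]
    nlinarith [Real.neg_one_le_cos (z * x), sq_nonneg z]
  · rw [min_eq_right hx]
    have := one_sub_cos_le_half_sq (z * x)
    nlinarith [sq_nonneg x, sq_nonneg z, mul_pow z x 2]

lemma norm_cexp_Izx (z x : ℝ) : ‖Complex.exp (Complex.I * z * x)‖ = 1 := by
  rw [Complex.norm_exp]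
  simp [Complex.mul_re]

lemma min_one_sq_meas : Measurable (fun x : ℝ => min 1 (x ^ 2)) :=
  measurable_const.min (measurable_id.pow_const 2)

/-- integrability of the truncation function from the lintegral finiteness hypothesis -/
lemma integrable_min_one_sq (ν : Measure ℝ)
    (hν : (∫⁻ x, ENNReal.ofReal (min 1 (x^2)) ∂ν) < ⊤) :
    Integrable (fun x : ℝ => min 1 (x ^ 2)) ν := by
  refine ⟨min_one_sq_meas.aestronglyMeasurable, ?_⟩
  rw [hasFiniteIntegral_iff_ofReal]
  · exact hν
  · filter_upwards with x
    positivity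

lemma integrable_one_sub_cos (z : ℝ) (ν : Measure ℝ)
    (hν : (∫⁻ x, ENNReal.ofReal (min 1 (x^2)) ∂ν) < ⊤) :
    Integrable (fun x : ℝ => 1 - Real.cos (z * x)) ν := by
  have hmin := (integrable_min_one_sq ν hν).const_mul (2 + z ^ 2)
  refine hmin.mono' ?_ ?_
  · exact (continuous_const.sub (Real.continuous_cos.comp
      (continuous_const.mul continuous_id))).measurable.aestronglyMeasurable
  · filter_upwards with x
    rw [Real.norm_eq_abs, _root_.abs_of_nonneg (by nlinarith [Real.cos_le_one (z * x)])]
    exact one_sub_cos_le_min z x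

lemma lk_integrand_bound (c : ℝ → ℝ) (hc : IsRepFn c) (z : ℝ) :
    ∃ K : ℝ, ∀ x : ℝ, x ≠ 0 →
      ‖Complex.exp (Complex.I * z * x) - 1 - Complex.I * z * c x‖ ≤ K * min 1 (x ^ 2) := by
  obtain ⟨hmeas, ⟨M, hM⟩, htend⟩ := hc
  obtain ⟨δ, hδ, hδ2⟩ := Metric.tendsto_nhdsWithin_nhds.mp htend 1 one_pos
  set δ' : ℝ := min δ (1 / (1 + |z|)) with hδ'def
  have hδ'pos : 0 < δ' := lt_min hδ (by positivity)
  have hδ'le1 : δ' ≤ 1 := le_trans (min_le_right _ _)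
    (by rw [div_le_one (by positivity)]; linarith [abs_nonneg z])
  have hMnn : 0 ≤ M := le_trans (abs_nonneg _) (hM 0)
  refine ⟨max (z ^ 2 + |z|) ((2 + |z| * M) / min 1 (δ' ^ 2)), fun x hx => ?_⟩
  rcases lt_or_ge |x| δ' with hsmall | hlarge
  · -- small x
    have hx2lt1 : x ^ 2 ≤ 1 := by
      have : |x| ≤ 1 := hsmall.le.trans hδ'le1
      nlinarith [abs_nonneg x, _root_.sq_abs x]
    have hminx : min 1 (x ^ 2) = x ^ 2 := min_eq_right hx2lt1
    have habs : ‖Complex.I * z * x‖ ≤ 1 := by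
      have h1 : ‖Complex.I * z * x‖ = |z| * |x| := by
        simp
      rw [h1]
      have h2 : |x| ≤ 1 / (1 + |z|) := hsmall.le.trans (min_le_right _ _)
      calc |z| * |x| ≤ |z| * (1 / (1 + |z|)) :=
            mul_le_mul_of_nonneg_left h2 (abs_nonneg z)
        _ ≤ 1 := by
            rw [mul_one_div, div_le_one (by positivity)]
            linarith [abs_nonneg z]
    have h1 : ‖Complex.exp (Complex.I * z * x) - 1 - Complex.I * z * x‖ ≤ z ^ 2 * x ^ 2 := by
      have := Complex.norm_exp_sub_one_sub_id_le habs
      refine this.trans (le_of_eq ?_)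
      have h1 : ‖Complex.I * z * x‖ = |z| * |x| := by
        simp
      rw [h1]
      rw [mul_pow, _root_.sq_abs, _root_.sq_abs]
    have h2 : |c x - x| ≤ x ^ 2 := by
      have hxmem : x ∈ ({(0:ℝ)}ᶜ : Set ℝ) := hx
      have hdist : dist x 0 < δ := by
        rw [Real.dist_eq, sub_zero]
        exact hsmall.trans_le (min_le_left _ _)
      have := hδ2 hxmem hdist
      rw [Real.dist_eq, sub_zero] at this
      have hx2pos : (0:ℝ) < x ^ 2 := by positivity
      rw [abs_div, abs_of_pos hx2pos, div_lt_one hx2pos] at this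
      exact this.le
    have key : Complex.exp (Complex.I * z * x) - 1 - Complex.I * z * c x
        = (Complex.exp (Complex.I * z * x) - 1 - Complex.I * z * x)
          + Complex.I * z * ((x : ℂ) - c x) := by ring
    calc ‖Complex.exp (Complex.I * z * x) - 1 - Complex.I * z * c x‖
        ≤ ‖Complex.exp (Complex.I * z * x) - 1 - Complex.I * z * x‖
          + ‖Complex.I * (z : ℂ) * ((x : ℂ) - c x)‖ := by
          rw [key]; exact norm_add_le _ _
      _ ≤ z ^ 2 * x ^ 2 + |z| * x ^ 2 := by
          refine add_le_add h1 ?_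
          have : ((x : ℂ) - c x) = ((x - c x : ℝ) : ℂ) := by push_cast; ring
          rw [this]
          simp only [norm_mul, Complex.norm_I, Complex.norm_real, Real.norm_eq_abs, one_mul]
          have : |x - c x| = |c x - x| := abs_sub_comm _ _
          rw [this]
          exact mul_le_mul_of_nonneg_left h2 (abs_nonneg z)
      _ = (z ^ 2 + |z|) * min 1 (x ^ 2) := by rw [hminx]; ring
      _ ≤ max (z ^ 2 + |z|) ((2 + |z| * M) / min 1 (δ' ^ 2)) * min 1 (x ^ 2) := by
          apply mul_le_mul_of_nonneg_right (le_max_left _ _)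
          positivity
  · -- large x
    have hnorm : ‖Complex.exp (Complex.I * z * x) - 1 - Complex.I * z * c x‖
        ≤ 2 + |z| * M := by
      calc ‖Complex.exp (Complex.I * z * x) - 1 - Complex.I * z * c x‖
          ≤ ‖Complex.exp (Complex.I * z * x) - 1‖ + ‖Complex.I * (z : ℂ) * c x‖ :=
            norm_sub_le _ _
        _ ≤ (‖Complex.exp (Complex.I * z * x)‖ + ‖(1 : ℂ)‖) + |z| * M := by
            refine add_le_add (norm_sub_le _ _) ?_
            simp only [norm_mul, Complex.norm_I, Complex.norm_real, Real.norm_eq_abs, one_mul]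
            exact mul_le_mul_of_nonneg_left (hM x) (abs_nonneg z)
        _ = 2 + |z| * M := by rw [norm_cexp_Izx]; norm_num
    have hminpos : (0:ℝ) < min 1 (δ' ^ 2) := lt_min one_pos (by positivity)
    have hminle : min 1 (δ' ^ 2) ≤ min 1 (x ^ 2) := by
      apply min_le_min le_rfl
      nlinarith [hδ'pos.le, abs_nonneg x, _root_.sq_abs x, _root_.sq_abs δ']
    calc ‖Complex.exp (Complex.I * z * x) - 1 - Complex.I * z * c x‖
        ≤ 2 + |z| * M := hnorm
      _ = ((2 + |z| * M) / min 1 (δ' ^ 2)) * min 1 (δ' ^ 2) := by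
          field_simp
      _ ≤ ((2 + |z| * M) / min 1 (δ' ^ 2)) * min 1 (x ^ 2) := by
          apply mul_le_mul_of_nonneg_left hminle
          positivity
      _ ≤ max (z ^ 2 + |z|) ((2 + |z| * M) / min 1 (δ' ^ 2)) * min 1 (x ^ 2) := by
          apply mul_le_mul_of_nonneg_right (le_max_right _ _)
          positivity

lemma integrable_lk_integrand (c : ℝ → ℝ) (hc : IsRepFn c) (z : ℝ) (ν : Measure ℝ)
    (h0 : ν {0} = 0) (hν : (∫⁻ x, ENNReal.ofReal (min 1 (x^2)) ∂ν) < ⊤) :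
    Integrable (fun x : ℝ => Complex.exp (Complex.I * z * x) - 1 - Complex.I * z * c x) ν := by
  obtain ⟨K, hK⟩ := lk_integrand_bound c hc z
  have hmin := (integrable_min_one_sq ν hν).const_mul K
  refine hmin.mono' ?_ ?_
  · have m1 : Measurable fun x : ℝ => Complex.exp (Complex.I * z * x) :=
      Complex.measurable_exp.comp (measurable_const.mul Complex.measurable_ofReal)
    have m2 : Measurable fun x : ℝ => Complex.I * z * (c x : ℂ) :=
      measurable_const.mul (Complex.measurable_ofReal.comp hc.1)
    exact ((m1.sub measurable_const).sub m2).aestronglyMeasurable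
  · have : ∀ᵐ x ∂ν, x ≠ 0 := by
      rw [ae_iff]
      simpa using h0
    filter_upwards [this] with x hx
    exact hK x hx

lemma re_lkInt (c : ℝ → ℝ) (hc : IsRepFn c) (z : ℝ) (ν : Measure ℝ)
    (h0 : ν {0} = 0) (hν : (∫⁻ x, ENNReal.ofReal (min 1 (x^2)) ∂ν) < ⊤) :
    (lkInt c ν z).re = -∫ x, (1 - Real.cos (z * x)) ∂ν := by
  have hint := integrable_lk_integrand c hc z ν h0 hν
  have hre := integral_re (𝕜 := ℂ) hint
  simp only [RCLike.re_to_complex] at hre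
  rw [lkInt, ← hre, ← integral_neg]
  congr 1
  funext x
  have : (Complex.exp (Complex.I * z * x)).re = Real.cos (z * x) := by
    rw [Complex.exp_re]
    simp [Complex.mul_re, Complex.mul_im]
  simp [Complex.sub_re, this, Complex.mul_re, Complex.mul_im]

end Aux

/-- (a/2)z² + ∫(1-cos zx)dν⁺ ≥ ∫(1-cos zx)dν⁻ for all z. -/
theorem stmt2 (c : ℝ → ℝ) (hc : IsRepFn c) (μ : Measure ℝ) [IsProbabilityMeasure μ]
    (a γ : ℝ) (νp νm : Measure ℝ) (h : HasTriplet c μ a νp νm γ) :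
    ∀ z : ℝ, (∫ x, (1 - Real.cos (z * x)) ∂νm) ≤
      a / 2 * z ^ 2 + ∫ x, (1 - Real.cos (z * x)) ∂νp := by
  intro z
  obtain ⟨hsing, h0p, h0m, hfin, hchar⟩ := h
  have hfp : (∫⁻ x, ENNReal.ofReal (min 1 (x^2)) ∂νp) < ⊤ := by
    rw [lintegral_add_measure] at hfin
    exact lt_of_le_of_lt le_self_add hfin
  have hfm : (∫⁻ x, ENNReal.ofReal (min 1 (x^2)) ∂νm) < ⊤ := by
    rw [lintegral_add_measure] at hfin
    exact lt_of_le_of_lt le_add_self hfin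
  -- norm of char function ≤ 1
  have hle : ‖charFn μ z‖ ≤ 1 := by
    rw [charFn]
    calc ‖∫ x, Complex.exp (Complex.I * z * x) ∂μ‖
        ≤ ∫ x, ‖Complex.exp (Complex.I * z * x)‖ ∂μ := norm_integral_le_integral_norm _
      _ = 1 := by simp only [norm_cexp_Izx]; simp
  rw [hchar z] at hle
  rw [Complex.norm_exp] at hle
  rw [Real.exp_le_one_iff] at hle
  have hre : (Complex.I * γ * z - a * z^2 / 2 + lkInt c νp z - lkInt c νm z).re
      = -(a * z^2 / 2) + (lkInt c νp z).re - (lkInt c νm z).re := by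
    simp [← Complex.ofReal_pow, Complex.add_re, Complex.sub_re, Complex.mul_re, Complex.mul_im, Complex.div_re,
      Complex.normSq, Complex.ofReal_re, Complex.ofReal_im]
  rw [hre, re_lkInt c hc z νp h0p hfp, re_lkInt c hc z νm h0m hfm] at hle
  have hring : a / 2 * z ^ 2 = a * z ^ 2 / 2 := by ring
  linarith
end
end

section
/- Let μ be quasi-infinitely divisible with characteristic triplet (0, ν, γ)_c (Gaussian variance zero). Then ν⁺(ℝ) ≥ ν⁻(ℝ). In particular, if ν⁺(ℝ) is finite, so is ν⁻(ℝ). -/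
open MeasureTheory Complex Filter

noncomputable section

namespace Stmt4Aux

open Topology

lemma min_sq_nonneg (x : ℝ) : 0 ≤ min 1 (x^2) := le_min zero_le_one (sq_nonneg x)

lemma sigmaFinite_aux (ν : Measure ℝ) (h0 : ν {0} = 0)
    (h : (∫⁻ x, ENNReal.ofReal (min 1 (x^2)) ∂ν) < ⊤) : SigmaFinite ν := by
  refine ⟨⟨⟨fun n => {x : ℝ | 1/(n+1 : ℝ) ≤ |x|} ∪ {0}, fun _ => trivial, ?_, ?_⟩⟩⟩
  · intro n
    have hle : ν ({x : ℝ | 1/(n+1:ℝ) ≤ |x|} ∪ {0}) ≤ ν {x : ℝ | 1/(n+1:ℝ) ≤ |x|} + ν {0} :=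
      measure_union_le _ _
    rw [h0, add_zero] at hle
    refine lt_of_le_of_lt hle ?_
    have hpos : (0:ℝ) < 1/(n+1:ℝ) := by positivity
    have hsub : {x : ℝ | 1/(n+1:ℝ) ≤ |x|} ⊆
        {x : ℝ | ENNReal.ofReal ((1/(n+1:ℝ))^2) ≤ ENNReal.ofReal (min 1 (x^2))} := by
      intro x hx
      simp only [Set.mem_setOf_eq] at hx ⊢
      apply ENNReal.ofReal_le_ofReal
      refine le_min ?_ ?_
      · have : (1/(n+1:ℝ)) ≤ 1 := by
          rw [div_le_one (by positivity)]
          have : (0:ℝ) ≤ n := Nat.cast_nonneg n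
          linarith
        nlinarith
      · have := pow_le_pow_left₀ hpos.le hx 2
        rwa [_root_.sq_abs] at this
    refine lt_of_le_of_lt (measure_mono hsub) ?_
    refine lt_of_le_of_lt (meas_ge_le_lintegral_div ?_ ?_ ?_) ?_
    · exact (measurable_const.min (measurable_id.pow_const 2)).ennreal_ofReal.aemeasurable
    · simp [ENNReal.ofReal_eq_zero, not_le, hpos]; positivity
    · exact ENNReal.ofReal_ne_top
    · exact ENNReal.div_lt_top h.ne (by simp [ENNReal.ofReal_eq_zero, not_le]; positivity)
  · rw [Set.eq_univ_iff_forall]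
    intro x
    by_cases hx : x = 0
    · exact Set.mem_iUnion.2 ⟨0, Or.inr hx⟩
    · obtain ⟨n, hn⟩ := exists_nat_one_div_lt (abs_pos.mpr hx)
      exact Set.mem_iUnion.2 ⟨n, Or.inl hn.le⟩

lemma norm_I_mul (z x : ℝ) : ‖Complex.I * (z:ℂ) * (x:ℂ)‖ = |z| * |x| := by
  simp [norm_mul, Complex.norm_real]

lemma re_I_mul (z x : ℝ) : (Complex.I * (z:ℂ) * (x:ℂ)).re = 0 := by
  simp [Complex.mul_re, Complex.mul_im]

lemma im_I_mul (z x : ℝ) : (Complex.I * (z:ℂ) * (x:ℂ)).im = z * x := by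
  simp [Complex.mul_im, Complex.mul_re]

lemma re_hker (c : ℝ → ℝ) (z x : ℝ) :
    (Complex.exp (Complex.I * z * x) - 1 - Complex.I * z * c x).re = Real.cos (z*x) - 1 := by
  rw [Complex.sub_re, Complex.sub_re, Complex.exp_re, re_I_mul, im_I_mul, re_I_mul]
  simp

lemma norm_exp_I_mul (z x : ℝ) : ‖Complex.exp (Complex.I * z * x)‖ = 1 := by
  rw [Complex.norm_exp, re_I_mul, Real.exp_zero]

lemma hker_bound (c : ℝ → ℝ) (hc : IsRepFn c) (z : ℝ) :
    ∃ K : ℝ, 0 ≤ K ∧ ∀ x : ℝ, x ≠ 0 →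
      ‖Complex.exp (Complex.I * z * x) - 1 - Complex.I * z * c x‖ ≤ K * min 1 (x^2) := by
  obtain ⟨_, ⟨M, hM⟩, hlim⟩ := hc
  have hM0 : 0 ≤ M := le_trans (abs_nonneg _) (hM 0)
  obtain ⟨δ0, hδ0, hδ⟩ := Metric.tendsto_nhdsWithin_nhds.mp hlim 1 one_pos
  set δ : ℝ := min δ0 (min 1 (1/(|z|+1))) with hδdef
  have hδpos : 0 < δ := lt_min hδ0 (lt_min one_pos (by positivity))
  have hδ1 : δ ≤ 1 := le_trans (min_le_right _ _) (min_le_left _ _)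
  have hδz : δ ≤ 1/(|z|+1) := le_trans (min_le_right _ _) (min_le_right _ _)
  have hmδ : 0 < min 1 (δ^2) := lt_min one_pos (by positivity)
  refine ⟨max (z^2 + |z|) ((2 + |z| * M) / min 1 (δ^2)), le_max_of_le_left (by positivity), ?_⟩
  intro x hx
  by_cases hxs : |x| < δ
  · -- small x
    have hxz : |z| * |x| ≤ 1 := by
      rcases le_or_gt (|z|) 0 with hz | hz
      · have : |z| = 0 := le_antisymm hz (abs_nonneg z)
        simp [this]
      · have h1 : |x| ≤ 1/(|z|+1) := le_trans hxs.le hδz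
        calc |z| * |x| ≤ |z| * (1/(|z|+1)) := by
              exact mul_le_mul_of_nonneg_left h1 (abs_nonneg z)
          _ ≤ 1 := by rw [mul_one_div, div_le_one (by positivity)]; linarith
    have habs : ‖Complex.I * (z:ℂ) * (x:ℂ)‖ = |z| * |x| := by
      simp [norm_mul, Complex.norm_real]
    have hexp : ‖Complex.exp (Complex.I * z * x) - 1 - Complex.I * z * x‖ ≤ (|z| * |x|)^2 := by
      have h := Complex.norm_exp_sub_one_sub_id_le (x := Complex.I * z * x)
        (by rw [habs]; exact hxz)
      rw [habs] at h
      simpa using h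
    have hcx : |c x - x| ≤ x^2 := by
      have hmem : x ∈ ({(0:ℝ)}ᶜ : Set ℝ) := by simp [hx]
      have hdist : dist x 0 < δ0 := by
        rw [Real.dist_eq, sub_zero]; exact lt_of_lt_of_le hxs (min_le_left _ _)
      have hx2 : (0:ℝ) < x^2 := by positivity
      have h := hδ hmem hdist
      rw [Real.dist_eq, sub_zero, abs_div, _root_.abs_of_nonneg (sq_nonneg x),
        div_lt_one hx2] at h
      exact h.le
    have key : ‖Complex.exp (Complex.I * z * x) - 1 - Complex.I * z * c x‖
        ≤ (z^2 + |z|) * x^2 := by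
      have hsplit : Complex.exp (Complex.I * z * x) - 1 - Complex.I * z * c x
          = (Complex.exp (Complex.I * z * x) - 1 - Complex.I * z * x)
            + Complex.I * z * ((x:ℂ) - (c x : ℂ)) := by ring
      rw [hsplit]
      refine le_trans (norm_add_le _ _) ?_
      have h2 : ‖Complex.I * (z:ℂ) * ((x:ℂ) - (c x:ℂ))‖ = |z| * |x - c x| := by
        simp [norm_mul, Complex.norm_real, ← Complex.ofReal_sub, Real.norm_eq_abs]
      rw [h2]
      have h3 : |z| * |x - c x| ≤ |z| * x^2 := by
        rw [abs_sub_comm]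
        exact mul_le_mul_of_nonneg_left hcx (abs_nonneg z)
      have h4 : (|z| * |x|)^2 = z^2 * x^2 := by
        rw [mul_pow, _root_.sq_abs, _root_.sq_abs]
      nlinarith [hexp]
    have hmin : min 1 (x^2) = x^2 := by
      rw [min_eq_right]
      nlinarith [abs_nonneg x, hxs, hδ1, _root_.sq_abs x]
    rw [hmin]
    exact le_trans key (mul_le_mul_of_nonneg_right (le_max_left _ _) (sq_nonneg x))
  · -- large x
    push_neg at hxs
    have hbig : ‖Complex.exp (Complex.I * z * x) - 1 - Complex.I * z * c x‖ ≤ 2 + |z| * M := by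
      refine le_trans (norm_sub_le _ _) ?_
      have h1 : ‖Complex.exp (Complex.I * z * x) - 1‖ ≤ 2 := by
        refine le_trans (norm_sub_le _ _) ?_
        rw [norm_exp_I_mul]; norm_num
      have h2 : ‖Complex.I * (z:ℂ) * (c x : ℂ)‖ ≤ |z| * M := by
        rw [norm_I_mul]
        exact mul_le_mul_of_nonneg_left (hM x) (abs_nonneg z)
      linarith
    have hminx : min 1 (δ^2) ≤ min 1 (x^2) := by
      refine min_le_min le_rfl ?_
      nlinarith [_root_.sq_abs x, hδpos]
    calc ‖Complex.exp (Complex.I * z * x) - 1 - Complex.I * z * c x‖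
        ≤ 2 + |z| * M := hbig
      _ = (2 + |z| * M) / min 1 (δ^2) * min 1 (δ^2) := by field_simp
      _ ≤ (2 + |z| * M) / min 1 (δ^2) * min 1 (x^2) := by
          exact mul_le_mul_of_nonneg_left hminx (by positivity)
      _ ≤ max (z^2 + |z|) ((2 + |z| * M) / min 1 (δ^2)) * min 1 (x^2) := by
          refine mul_le_mul_of_nonneg_right (le_max_right _ _) ?_
          exact le_min zero_le_one (sq_nonneg x)

lemma integrable_min_sq (ν : Measure ℝ) (h : (∫⁻ x, ENNReal.ofReal (min 1 (x^2)) ∂ν) < ⊤) :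
    Integrable (fun x => min 1 (x^2)) ν := by
  constructor
  · exact ((measurable_const.min (measurable_id.pow_const 2))).aestronglyMeasurable
  · rw [hasFiniteIntegral_iff_norm]
    refine lt_of_le_of_lt (le_of_eq (lintegral_congr fun x => ?_)) h
    rw [Real.norm_eq_abs, _root_.abs_of_nonneg (min_sq_nonneg x)]

lemma ae_ne_zero (ν : Measure ℝ) (h0 : ν {0} = 0) : ∀ᵐ x ∂ν, x ≠ 0 := by
  rw [ae_iff]
  convert h0 using 2
  ext x; simp

lemma measurable_hker (c : ℝ → ℝ) (hcm : Measurable c) (z : ℝ) :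
    Measurable (fun x : ℝ => Complex.exp (Complex.I * z * x) - 1 - Complex.I * z * c x) := by
  apply Measurable.sub
  · apply Measurable.sub
    · exact Complex.measurable_exp.comp ((Complex.measurable_ofReal).const_mul _)
    · exact measurable_const
  · exact ((Complex.measurable_ofReal.comp hcm).const_mul _)

lemma integrable_hker (c : ℝ → ℝ) (hc : IsRepFn c) (ν : Measure ℝ) (h0 : ν {0} = 0)
    (hfin : (∫⁻ x, ENNReal.ofReal (min 1 (x^2)) ∂ν) < ⊤) (z : ℝ) :
    Integrable (fun x : ℝ => Complex.exp (Complex.I * z * x) - 1 - Complex.I * z * c x) ν := by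
  obtain ⟨K, hK0, hK⟩ := hker_bound c hc z
  refine Integrable.mono' ((integrable_min_sq ν hfin).const_mul K)
    ((measurable_hker c hc.1 z).aestronglyMeasurable) ?_
  filter_upwards [ae_ne_zero ν h0] with x hx
  exact hK x hx

lemma cos_le (c : ℝ → ℝ) (hc : IsRepFn c) (μ : Measure ℝ) [IsProbabilityMeasure μ]
    (γ : ℝ) (νp νm : Measure ℝ) (h : HasTriplet c μ 0 νp νm γ) (z : ℝ) :
    ∫⁻ x, ENNReal.ofReal (1 - Real.cos (z*x)) ∂νm
      ≤ ∫⁻ x, ENNReal.ofReal (1 - Real.cos (z*x)) ∂νp := by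
  obtain ⟨-, h0p, h0m, hfin, hch⟩ := h
  rw [lintegral_add_measure] at hfin
  have hfp := (ENNReal.add_lt_top.mp hfin).1
  have hfm := (ENNReal.add_lt_top.mp hfin).2
  have hip := integrable_hker c hc νp h0p hfp z
  have him := integrable_hker c hc νm h0m hfm z
  have hnorm : ‖charFn μ z‖ ≤ 1 := by
    unfold charFn
    refine le_trans (norm_integral_le_integral_norm _) ?_
    rw [integral_congr_ae (Filter.Eventually.of_forall fun x => norm_exp_I_mul z x)]
    simp
  have hre : (Complex.I * (γ:ℂ) * (z:ℂ) - ((0:ℝ):ℂ) * (z:ℂ)^2/2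
      + lkInt c νp z - lkInt c νm z).re ≤ 0 := by
    rw [hch z, Complex.norm_exp] at hnorm
    exact Real.exp_le_one_iff.mp hnorm
  have hrep : (lkInt c νp z).re = ∫ x, (Real.cos (z*x) - 1) ∂νp := by
    have h1 := integral_re (μ := νp) hip
    simp only [RCLike.re_to_complex] at h1
    rw [lkInt, ← h1]
    exact integral_congr_ae (Filter.Eventually.of_forall fun x => re_hker c z x)
  have hrem : (lkInt c νm z).re = ∫ x, (Real.cos (z*x) - 1) ∂νm := by
    have h1 := integral_re (μ := νm) him
    simp only [RCLike.re_to_complex] at h1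
    rw [lkInt, ← h1]
    exact integral_congr_ae (Filter.Eventually.of_forall fun x => re_hker c z x)
  have hre2 : ∫ x, (Real.cos (z*x) - 1) ∂νp - ∫ x, (Real.cos (z*x) - 1) ∂νm ≤ 0 := by
    rw [← hrep, ← hrem]
    simpa [Complex.add_re, Complex.sub_re, re_I_mul] using hre
  have hintm : Integrable (fun x => 1 - Real.cos (z*x)) νm := by
    refine (him.re.neg).congr (Filter.Eventually.of_forall fun x => ?_)
    simp only [Pi.neg_apply, RCLike.re_to_complex, re_hker]
    ring
  have hintp : Integrable (fun x => 1 - Real.cos (z*x)) νp := by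
    refine (hip.re.neg).congr (Filter.Eventually.of_forall fun x => ?_)
    simp only [Pi.neg_apply, RCLike.re_to_complex, re_hker]
    ring
  have hreal : ∫ x, (1 - Real.cos (z*x)) ∂νm ≤ ∫ x, (1 - Real.cos (z*x)) ∂νp := by
    have em : ∫ x, (1 - Real.cos (z*x)) ∂νm = - ∫ x, (Real.cos (z*x) - 1) ∂νm := by
      rw [← integral_neg]; congr 1; funext x; ring
    have ep : ∫ x, (1 - Real.cos (z*x)) ∂νp = - ∫ x, (Real.cos (z*x) - 1) ∂νp := by
      rw [← integral_neg]; congr 1; funext x; ring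
    rw [em, ep]; linarith
  have nn : ∀ x : ℝ, 0 ≤ 1 - Real.cos (z*x) := fun x => sub_nonneg.mpr (Real.cos_le_one _)
  rw [← ofReal_integral_eq_lintegral_ofReal hintm (Filter.Eventually.of_forall nn),
    ← ofReal_integral_eq_lintegral_ofReal hintp (Filter.Eventually.of_forall nn)]
  exact ENNReal.ofReal_le_ofReal hreal

lemma inner_int (n : ℕ) (x : ℝ) (hx : x ≠ 0) :
    ∫⁻ z in Set.Ioc (0:ℝ) n, ENNReal.ofReal (1 - Real.cos (z*x)) =
      ENNReal.ofReal ((n:ℝ) - Real.sin (n*x)/x) := by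
  have hcos : Continuous fun z : ℝ => Real.cos (z*x) := by continuity
  have hcont : Continuous fun z : ℝ => 1 - Real.cos (z*x) := continuous_const.sub hcos
  have hint : IntegrableOn (fun z : ℝ => 1 - Real.cos (z*x)) (Set.Ioc (0:ℝ) n) volume :=
    hcont.integrableOn_Ioc
  rw [← ofReal_integral_eq_lintegral_ofReal hint (Filter.Eventually.of_forall fun z =>
    sub_nonneg.mpr (Real.cos_le_one _))]
  congr 1
  rw [← intervalIntegral.integral_of_le (by positivity : (0:ℝ) ≤ n)]
  rw [intervalIntegral.integral_sub intervalIntegrable_const (hcos.intervalIntegrable _ _)]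
  rw [intervalIntegral.integral_const, intervalIntegral.integral_comp_mul_right Real.cos hx,
    integral_cos]
  simp [smul_eq_mul]
  ring

lemma fubini_eq (ν : Measure ℝ) [SigmaFinite ν] (h0 : ν {0} = 0) (n : ℕ) (hn : 1 ≤ n) :
    ∫⁻ x, ENNReal.ofReal (1 - Real.sin (n*x)/(n*x)) ∂ν
      = ENNReal.ofReal (1/(n:ℝ)) *
        ∫⁻ z in Set.Ioc (0:ℝ) n, (∫⁻ x, ENNReal.ofReal (1 - Real.cos (z*x)) ∂ν) := by
  have hn0 : (0:ℝ) < n := by exact_mod_cast hn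
  have step1 : ∫⁻ x, ENNReal.ofReal (1 - Real.sin (n*x)/(n*x)) ∂ν
      = ∫⁻ x, (ENNReal.ofReal (1/(n:ℝ)) *
          ∫⁻ z in Set.Ioc (0:ℝ) n, ENNReal.ofReal (1 - Real.cos (z*x))) ∂ν := by
    refine lintegral_congr_ae ?_
    filter_upwards [ae_ne_zero ν h0] with x hx
    rw [inner_int n x hx, ← ENNReal.ofReal_mul (by positivity)]
    congr 1
    field_simp
  rw [step1, lintegral_const_mul' _ _ ENNReal.ofReal_ne_top]
  congr 1
  refine lintegral_lintegral_swap ?_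
  apply Measurable.aemeasurable
  apply Measurable.ennreal_ofReal
  exact (continuous_const.sub
    (Real.continuous_cos.comp (continuous_snd.mul continuous_fst))).measurable

end Stmt4Aux

open Stmt4Aux Topology in
/-- if the Gaussian variance is zero, then ν⁺(ℝ) ≥ ν⁻(ℝ). -/
theorem stmt4 (c : ℝ → ℝ) (hc : IsRepFn c) (μ : Measure ℝ) [IsProbabilityMeasure μ]
    (γ : ℝ) (νp νm : Measure ℝ) (h : HasTriplet c μ 0 νp νm γ) :
    νm Set.univ ≤ νp Set.univ := by
  have h0p := h.2.1
  have h0m := h.2.2.1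
  have hfin := h.2.2.2.1
  rw [lintegral_add_measure] at hfin
  have hfp := (ENNReal.add_lt_top.mp hfin).1
  have hfm := (ENNReal.add_lt_top.mp hfin).2
  haveI : SigmaFinite νp := sigmaFinite_aux νp h0p hfp
  haveI : SigmaFinite νm := sigmaFinite_aux νm h0m hfm
  set g : ℕ → ℝ → ENNReal := fun n x => ENNReal.ofReal (1 - Real.sin (n*x)/(n*x)) with hg
  have hgm : ∀ n, Measurable (g n) := by
    intro n
    apply Measurable.ennreal_ofReal
    exact measurable_const.sub
      ((Real.continuous_sin.comp (continuous_const.mul continuous_id)).measurable.div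
        ((continuous_const.mul continuous_id).measurable))
  have hsinc : ∀ u : ℝ, |Real.sin u / u| ≤ 1 := by
    intro u
    rcases eq_or_ne u 0 with rfl | hu
    · simp
    · rw [abs_div, div_le_one (abs_pos.mpr hu)]
      exact Real.abs_sin_le_abs
  have htend : ∀ x : ℝ, Tendsto (fun n : ℕ => g n x) atTop (𝓝 1) := by
    intro x
    by_cases hx : x = 0
    · have : ∀ n : ℕ, g n x = 1 := by
        intro n
        simp [hg, hx]
      simpa [this] using tendsto_const_nhds (x := (1:ENNReal)) (f := atTop (α := ℕ))
    · have hs : Tendsto (fun n : ℕ => Real.sin (n*x)/(n*x)) atTop (𝓝 0) := by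
        have hineq : ∀ n : ℕ, ‖Real.sin (n*x)/(n*x)‖ ≤ 1/(n:ℝ) * (1/|x|) := by
          intro n
          rw [Real.norm_eq_abs]
          calc |Real.sin (n*x)/(n*x)| ≤ 1/|(n:ℝ)*x| := by
                rcases eq_or_ne ((n:ℝ)*x) 0 with h' | h'
                · simp [h']
                · rw [abs_div, div_le_div_iff₀ (abs_pos.mpr h') (abs_pos.mpr h'), one_mul]
                  calc |Real.sin ((n:ℝ)*x)| * |(n:ℝ)*x| ≤ 1 * |(n:ℝ)*x| :=
                        mul_le_mul_of_nonneg_right (Real.abs_sin_le_one _) (abs_nonneg _)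
                    _ = |(n:ℝ)*x| := one_mul _
            _ = 1/(n:ℝ) * (1/|x|) := by
                rw [abs_mul, Nat.abs_cast, div_mul_div_comm, one_mul]
        have hb : Tendsto (fun n : ℕ => 1/(n:ℝ) * (1/|x|)) atTop (𝓝 0) := by
          have := tendsto_one_div_atTop_nhds_zero_nat.mul_const (1/|x|)
          simpa using this
        exact squeeze_zero_norm hineq hb
      have h1 : Tendsto (fun n : ℕ => 1 - Real.sin (n*x)/(n*x)) atTop (𝓝 1) := by
        have := hs.const_sub 1
        simpa using this
      have := ENNReal.tendsto_ofReal h1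
      simpa [hg] using this
  have hbound : ∀ n x, g n x ≤ 2 := by
    intro n x
    rw [hg]
    calc ENNReal.ofReal (1 - Real.sin (n*x)/(n*x)) ≤ ENNReal.ofReal 2 := by
          apply ENNReal.ofReal_le_ofReal
          have := abs_le.mp (hsinc ((n:ℝ)*x))
          linarith [this.1]
      _ = 2 := by norm_num
  have key : ∀ n : ℕ, 1 ≤ n → ∫⁻ x, g n x ∂νm ≤ ∫⁻ x, g n x ∂νp := by
    intro n hn
    rw [hg]
    simp only []
    rw [fubini_eq νm h0m n hn, fubini_eq νp h0p n hn]
    exact mul_le_mul_right (lintegral_mono fun z => cos_le c hc μ γ νp νm h z) _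
  have step2 : νm Set.univ ≤ liminf (fun n => ∫⁻ x, g n x ∂νp) atTop := by
    calc νm Set.univ = ∫⁻ _, (1:ENNReal) ∂νm := by simp
      _ = ∫⁻ x, liminf (fun n : ℕ => g n x) atTop ∂νm := by
          refine lintegral_congr fun x => ?_
          rw [(htend x).liminf_eq]
      _ ≤ liminf (fun n => ∫⁻ x, g n x ∂νm) atTop := lintegral_liminf_le hgm
      _ ≤ liminf (fun n => ∫⁻ x, g n x ∂νp) atTop :=
          liminf_le_liminf (Filter.eventually_atTop.mpr ⟨1, fun n hn => key n hn⟩)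
  rcases eq_or_ne (νp Set.univ) ⊤ with htop | htop
  · rw [htop]; exact le_top
  · have hdc : Tendsto (fun n => ∫⁻ x, g n x ∂νp) atTop (𝓝 (∫⁻ _, (1:ENNReal) ∂νp)) := by
      refine tendsto_lintegral_of_dominated_convergence (fun _ => 2) hgm
        (fun n => Filter.Eventually.of_forall fun x => hbound n x) ?_
        (Filter.Eventually.of_forall htend)
      rw [lintegral_const]
      exact ENNReal.mul_ne_top (by norm_num) htop
    refine le_trans step2 ?_
    rw [hdc.liminf_eq]
    simp
end
end

section
/- Let ξ ∈ ℂ with |ξ| > 1 and μ = δ₁ - ξδ₀. Then μ̂(z) = (1-ξ) exp(∫_ℝ (e^{izx} - 1) ν̃(dx)) for all z ∈ ℝ, where ν̃ = -∑_{m=1}^∞ m^{-1} ξ^{-m} δ_m. -/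
open Complex

/-- for |ξ| > 1 and μ = δ₁ - ξδ₀,
μ̂(z) = (1-ξ) exp(∫ (e^{izx}-1) dν̃) with ν̃ = -∑_{m≥1} m⁻¹ ξ^{-m} δ_m. -/
theorem stmt7 (ξ : ℂ) (hξ : 1 < ‖ξ‖) :
    ∀ z : ℝ, Complex.exp (Complex.I * z) - ξ =
      (1 - ξ) * Complex.exp (
        ∑' m : ℕ, -(ξ⁻¹ ^ (m + 1) / ((m : ℂ) + 1)) *
          (Complex.exp (Complex.I * z * ((m : ℂ) + 1)) - 1)) := by
  intro z
  have hξ0 : ξ ≠ 0 := by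
    intro h; rw [h] at hξ; simp at hξ; linarith
  set a : ℂ := Complex.exp (Complex.I * z) with ha
  have hanorm : ‖a‖ = 1 := by
    rw [ha, Complex.norm_exp]
    simp
  set w : ℂ := ξ⁻¹ with hw
  have hwnorm : ‖w‖ < 1 := by
    rw [hw, norm_inv]
    rw [inv_lt_one_iff₀]
    right; exact hξ
  have hwanorm : ‖w * a‖ < 1 := by
    rw [norm_mul, hanorm, mul_one]; exact hwnorm
  have h1 : HasSum (fun n : ℕ ↦ (w * a) ^ n / n) (-Complex.log (1 - w * a)) :=
    Complex.hasSum_taylorSeries_neg_log hwanorm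
  have h2 : HasSum (fun n : ℕ ↦ w ^ n / n) (-Complex.log (1 - w)) :=
    Complex.hasSum_taylorSeries_neg_log hwnorm
  have h3 : HasSum (fun n : ℕ ↦ w ^ n / n - (w * a) ^ n / n)
      (-Complex.log (1 - w) - -Complex.log (1 - w * a)) := h2.sub h1
  have h4 : HasSum (fun m : ℕ ↦ w ^ (m + 1) / (m + 1) - (w * a) ^ (m + 1) / (m + 1))
      (-Complex.log (1 - w) - -Complex.log (1 - w * a)) := by
    have := (hasSum_nat_add_iff (f := fun n : ℕ ↦ w ^ n / n - (w * a) ^ n / n)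
      (g := -Complex.log (1 - w) - -Complex.log (1 - w * a)) 1).mpr (by simpa using h3)
    simpa using this
  have hterm : ∀ m : ℕ, -(ξ⁻¹ ^ (m + 1) / ((m : ℂ) + 1)) *
      (Complex.exp (Complex.I * z * ((m : ℂ) + 1)) - 1)
      = w ^ (m + 1) / ((m : ℂ) + 1) - (w * a) ^ (m + 1) / ((m : ℂ) + 1) := by
    intro m
    have hexp : Complex.exp (Complex.I * z * ((m : ℂ) + 1)) = a ^ (m + 1) := by
      rw [ha, ← Complex.exp_nat_mul]
      push_cast
      ring_nf
    rw [hexp, ← hw]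
    ring
  have h5 : (∑' m : ℕ, -(ξ⁻¹ ^ (m + 1) / ((m : ℂ) + 1)) *
      (Complex.exp (Complex.I * z * ((m : ℂ) + 1)) - 1))
      = -Complex.log (1 - w) - -Complex.log (1 - w * a) := by
    refine HasSum.tsum_eq ?_
    convert h4 using 1
    funext m
    exact hterm m
  rw [h5]
  have hne1 : (1 : ℂ) - w ≠ 0 := by
    intro h
    have : w = 1 := by linear_combination -h
    rw [this] at hwnorm; simp at hwnorm
  have hne2 : (1 : ℂ) - w * a ≠ 0 := by
    intro h
    have : w * a = 1 := by linear_combination -h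
    rw [this] at hwanorm; simp at hwanorm
  rw [sub_neg_eq_add, Complex.exp_add, Complex.exp_neg, Complex.exp_log hne1,
    Complex.exp_log hne2]
  have hξ1 : ξ ≠ 1 := by
    intro h; rw [h] at hξ; simp at hξ
  have hne3 : -ξ + ξ ^ 2 ≠ 0 := by
    have : -ξ + ξ ^ 2 = ξ * (ξ - 1) := by ring
    rw [this]
    exact mul_ne_zero hξ0 (sub_ne_zero.mpr hξ1)
  rw [hw]
  field_simp
  ring
end

section
/- Let μ = ∑_{j=0}^n a_j δ_j be a probability distribution on {0,1,…,n} with a_n > 0. Then the following are equivalent: (i) μ is quasi-infinitely divisible; (ii) μ̂(z) ≠ 0 for all z ∈ ℝ; (iii) the polynomial w ↦ ∑_{j=0}^n a_j w^j has no roots on the unit circle {w ∈ ℂ : |w| = 1}. -/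
open MeasureTheory Complex Filter
open scoped ENNReal NNReal

noncomputable section

def rootBeta (α : ℂ) (m : ℤ) : ℂ :=
  if ‖α‖ < 1 then (if m < 0 then -(α ^ (-m).toNat) / ((-m : ℤ) : ℂ) else 0)
  else (if 0 < m then -(α⁻¹ ^ m.toNat) / ((m : ℤ) : ℂ) else 0)

/-- The "inner variable" for the log series. -/

def rootU (α : ℂ) (z : ℝ) : ℂ :=
  if ‖α‖ < 1 then α * Complex.exp (-(Complex.I * z)) else α⁻¹ * Complex.exp (Complex.I * z)

def rootChi (α : ℂ) : ℝ := if ‖α‖ < 1 then 1 else 0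

def rootD (α : ℂ) : ℂ := if ‖α‖ < 1 then 1 else -α

lemma norm_exp_I_mul (z : ℝ) : ‖Complex.exp (Complex.I * z)‖ = 1 := by
  rw [Complex.norm_exp]
  simp

lemma norm_exp_neg_I_mul (z : ℝ) : ‖Complex.exp (-(Complex.I * z))‖ = 1 := by
  rw [Complex.norm_exp]
  simp

lemma norm_rootU_lt_one {α : ℂ} (hα : ‖α‖ ≠ 1) (z : ℝ) : ‖rootU α z‖ < 1 := by
  rw [rootU]
  split_ifs with h
  · rw [norm_mul, norm_exp_neg_I_mul, mul_one]; exact h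
  · push_neg at h
    have h1 : 1 < ‖α‖ := lt_of_le_of_ne h (Ne.symm hα)
    rw [norm_mul, norm_exp_I_mul, mul_one, norm_inv]
    rw [inv_lt_one_iff₀]
    right; exact h1

lemma rootBeta_hasSum {α : ℂ} (hα : ‖α‖ ≠ 1) (z : ℝ) :
    HasSum (fun m : ℤ => rootBeta α m * Complex.exp (Complex.I * z * m))
      (Complex.log (1 - rootU α z)) := by
  have hu := norm_rootU_lt_one hα z
  have htay := hasSum_taylorSeries_neg_log hu
  -- htay : HasSum (fun k : ℕ => (rootU α z) ^ k / k) (-log (1 - rootU α z))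
  have htay' : HasSum (fun k : ℕ => -((rootU α z) ^ k / k)) (Complex.log (1 - rootU α z)) := by
    simpa using htay.neg
  by_cases h : ‖α‖ < 1
  · -- inner root : support on negative integers, injection k ↦ -k
    have hinj : Function.Injective (fun k : ℕ => -(k : ℤ)) := by
      intro a b hab; simpa using hab
    rw [← Function.Injective.hasSum_iff hinj]
    · convert htay' using 1
      funext k
      simp only [Function.comp]
      rcases Nat.eq_zero_or_pos k with rfl | hk
      · simp [rootBeta, h]
      · have hneg : -(k : ℤ) < 0 := by exact_mod_cast Int.neg_neg_of_pos (by exact_mod_cast hk)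
        rw [rootBeta, if_pos h, if_pos hneg]
        have : ((-(-(k : ℤ))).toNat) = k := by simp
        rw [this, rootU, if_pos h]
        rw [mul_pow, ← Complex.exp_nat_mul]
        have hz : Complex.exp (Complex.I * z * (-(k:ℤ) : ℤ)) = Complex.exp ((k : ℂ) * -(Complex.I * z)) := by
          congr 1; push_cast; ring
        rw [hz]
        field_simp
        simp
    · intro m hm
      have hm' : ¬ m < 0 := by
        intro hneg
        exact hm ⟨(-m).toNat, by simp [Int.toNat_of_nonneg (le_of_lt (neg_pos.mpr hneg))]⟩
      simp [rootBeta, h, hm']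
  · -- outer root : support on positive integers, injection k ↦ k
    have hinj : Function.Injective (fun k : ℕ => (k : ℤ)) := fun a b hab => Nat.cast_injective hab
    rw [← Function.Injective.hasSum_iff hinj]
    · convert htay' using 1
      funext k
      simp only [Function.comp]
      rcases Nat.eq_zero_or_pos k with rfl | hk
      · simp [rootBeta, h]
      · have hpos : (0 : ℤ) < (k : ℤ) := by exact_mod_cast hk
        rw [rootBeta, if_neg h, if_pos hpos]
        have : ((k : ℤ)).toNat = k := by simp
        rw [this, rootU, if_neg h]
        rw [mul_pow, ← Complex.exp_nat_mul]
        have hz : Complex.exp (Complex.I * z * ((k:ℤ) : ℂ)) = Complex.exp ((k : ℂ) * (Complex.I * z)) := by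
          congr 1; push_cast; ring
        rw [hz]
        field_simp
        simp
    · intro m hm
      have hm' : ¬ 0 < m := by
        intro hpos
        exact hm ⟨m.toNat, by simp [Int.toNat_of_nonneg (le_of_lt hpos)]⟩
      simp [rootBeta, h, hm']

lemma norm_div_nat_le (w : ℂ) (k : ℕ) : ‖-(w ^ k) / ((k:ℤ) : ℂ)‖ ≤ ‖w‖ ^ k := by
  rcases Nat.eq_zero_or_pos k with rfl | hk
  · simp
  · rw [norm_div, norm_neg, norm_pow]
    have h1 : (1:ℝ) ≤ ‖((k:ℤ) : ℂ)‖ := by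
      push_cast
      rw [Complex.norm_natCast]
      exact_mod_cast hk
    calc ‖w‖ ^ k / ‖((k:ℤ):ℂ)‖ ≤ ‖w‖ ^ k / 1 := by
          apply div_le_div_of_nonneg_left ?_ ?_ h1 <;> positivity
      _ = ‖w‖ ^ k := by rw [div_one]

lemma rootBeta_norm_summable {α : ℂ} (hα : ‖α‖ ≠ 1) :
    Summable (fun m : ℤ => ‖rootBeta α m‖) := by
  by_cases h : ‖α‖ < 1
  · have hinj : Function.Injective (fun k : ℕ => -(k : ℤ)) := by
      intro a b hab; simpa using hab
    have hzero : ∀ m ∉ Set.range (fun k : ℕ => -(k : ℤ)), ‖rootBeta α m‖ = 0 := by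
      intro m hm
      have hm' : ¬ m < 0 := by
        intro hneg
        exact hm ⟨(-m).toNat, by simp [Int.toNat_of_nonneg (le_of_lt (neg_pos.mpr hneg))]⟩
      simp [rootBeta, h, hm']
    rw [← Function.Injective.summable_iff hinj hzero]
    have hle : ∀ k : ℕ, ((fun m : ℤ => ‖rootBeta α m‖) ∘ (fun k : ℕ => -(k : ℤ))) k
        ≤ (‖α‖) ^ k := by
      intro k
      simp only [Function.comp]
      rcases Nat.eq_zero_or_pos k with rfl | hk
      · simp [rootBeta, h]
      · have hneg : -(k : ℤ) < 0 := by exact_mod_cast Int.neg_neg_of_pos (by exact_mod_cast hk)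
        rw [rootBeta, if_pos h, if_pos hneg]
        have h2 : ((-(-(k : ℤ))).toNat) = k := by simp
        have h3 : (-(-(k:ℤ)) : ℤ) = (k : ℤ) := by ring
        rw [h2, h3]
        simpa using norm_div_nat_le α k
    exact Summable.of_nonneg_of_le (fun k => norm_nonneg _) hle
      (summable_geometric_of_lt_one (norm_nonneg _) h)
  · push_neg at h
    have h1 : 1 < ‖α‖ := lt_of_le_of_ne h (Ne.symm hα)
    have h' : ¬ ‖α‖ < 1 := not_lt.mpr h
    have hinj : Function.Injective (fun k : ℕ => (k : ℤ)) := fun a b hab => Nat.cast_injective hab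
    have hzero : ∀ m ∉ Set.range (fun k : ℕ => (k : ℤ)), ‖rootBeta α m‖ = 0 := by
      intro m hm
      have hm' : ¬ 0 < m := by
        intro hpos
        exact hm ⟨m.toNat, by simp [Int.toNat_of_nonneg (le_of_lt hpos)]⟩
      simp [rootBeta, h', hm']
    rw [← Function.Injective.summable_iff hinj hzero]
    have hle : ∀ k : ℕ, ((fun m : ℤ => ‖rootBeta α m‖) ∘ (fun k : ℕ => (k : ℤ))) k
        ≤ ((‖α‖)⁻¹) ^ k := by
      intro k
      simp only [Function.comp]
      rcases Nat.eq_zero_or_pos k with rfl | hk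
      · simp [rootBeta, h']
      · have hpos : (0 : ℤ) < (k : ℤ) := by exact_mod_cast hk
        rw [rootBeta, if_neg h', if_pos hpos]
        have h2 : ((k : ℤ)).toNat = k := by simp
        rw [h2]
        simpa using norm_div_nat_le α⁻¹ k
    exact Summable.of_nonneg_of_le (fun k => norm_nonneg _) hle
      (summable_geometric_of_lt_one (by positivity) (by rw [inv_lt_one_iff₀]; right; exact h1))

lemma rootBeta_zero (α : ℂ) : rootBeta α 0 = 0 := by
  simp [rootBeta]

lemma rootBeta_conj (α : ℂ) (m : ℤ) :
    (starRingEnd ℂ) (rootBeta α m) = rootBeta ((starRingEnd ℂ) α) m := by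
  rw [rootBeta, rootBeta, Complex.norm_conj]
  split_ifs with h1 h2 h2 <;>
    simp [map_div₀, map_neg, map_pow, map_inv₀, map_intCast]

lemma root_factor {α : ℂ} (hα : ‖α‖ ≠ 1) (z : ℝ) :
    Complex.exp (Complex.I * z) - α =
      rootD α * Complex.exp (Complex.I * (rootChi α) * z + Complex.log (1 - rootU α z)) := by
  have hu : ‖rootU α z‖ < 1 := norm_rootU_lt_one hα z
  have hne : 1 - rootU α z ≠ 0 := by
    intro hcon
    have : rootU α z = 1 := by linear_combination -hcon
    rw [this] at hu; simp at hu
  rw [Complex.exp_add, Complex.exp_log hne]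
  rw [rootD, rootChi, rootU]
  split_ifs with h
  · push_cast
    rw [one_mul, mul_one, mul_sub, mul_one,
      show Complex.exp (Complex.I * z) * (α * Complex.exp (-(Complex.I * z)))
          = α * (Complex.exp (Complex.I * z) * Complex.exp (-(Complex.I * z))) by ring,
      ← Complex.exp_add]
    simp
  · push_neg at h
    have h0 : α ≠ 0 := by
      intro hcon; rw [hcon] at h; simp at h
      linarith
    push_cast
    rw [mul_zero, zero_mul, Complex.exp_zero, one_mul,
      show (-α) * (1 - α⁻¹ * Complex.exp (Complex.I * z))
          = -α + (α * α⁻¹) * Complex.exp (Complex.I * z) by ring,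
      mul_inv_cancel₀ h0]
    ring

/-- multiset HasSum lemma -/

lemma multiset_hasSum {s : Multiset ℂ} {F : ℂ → ℤ → ℂ} {g : ℂ → ℂ}
    (h : ∀ α ∈ s, HasSum (F α) (g α)) :
    HasSum (fun m => (s.map (fun α => F α m)).sum) ((s.map g).sum) := by
  induction s using Multiset.induction_on with
  | empty => simpa using hasSum_zero
  | cons a s ih =>
    have ha := h a (Multiset.mem_cons_self a s)
    have hs := ih (fun α hαs => h α (Multiset.mem_cons_of_mem hαs))
    simpa [Multiset.map_cons, Multiset.sum_cons] using ha.add hs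

lemma multiset_summable_norm {s : Multiset ℂ} {F : ℂ → ℤ → ℂ}
    (h : ∀ α ∈ s, Summable (fun m => ‖F α m‖)) :
    Summable (fun m => ‖(s.map (fun α => F α m)).sum‖) := by
  have key : Summable (fun m => (s.map (fun α => ‖F α m‖)).sum) := by
    induction s using Multiset.induction_on with
    | empty => simpa using summable_zero
    | cons a s ih =>
      have ha := h a (Multiset.mem_cons_self a s)
      have hs := ih (fun α hαs => h α (Multiset.mem_cons_of_mem hαs))
      simpa [Multiset.map_cons, Multiset.sum_cons] using ha.add hs
  refine Summable.of_nonneg_of_le (fun m => norm_nonneg _) (fun m => ?_) key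
  calc ‖(s.map (fun α => F α m)).sum‖ ≤ ((s.map (fun α => F α m)).map norm).sum :=
        norm_multiset_sum_le _
    _ = (s.map (fun α => ‖F α m‖)).sum := by rw [Multiset.map_map]; rfl

lemma keyIdentity (n : ℕ) (a : ℕ → ℝ) (han : (a n : ℝ) ≠ 0)
    (hsum : ∑ j ∈ Finset.range (n + 1), a j = 1)
    (h3 : ∀ w : ℂ, ‖w‖ = 1 → ∑ j ∈ Finset.range (n + 1), (a j : ℂ) * w ^ j ≠ 0) :
    ∃ b : ℤ → ℝ, b 0 = 0 ∧ Summable (fun m => ‖b m‖) ∧ ∃ R : ℝ,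
      ∀ z : ℝ, ∑ j ∈ Finset.range (n + 1), (a j : ℂ) * Complex.exp (Complex.I * z) ^ j
        = Complex.exp (Complex.I * R * z
            + ∑' m : ℤ, (b m : ℂ) * (Complex.exp (Complex.I * z * m) - 1)) := by
  classical
  set P : Polynomial ℂ := ∑ j ∈ Finset.range (n + 1), Polynomial.C ((a j : ℂ)) * Polynomial.X ^ j
    with hPdef
  have heval : ∀ w : ℂ, P.eval w = ∑ j ∈ Finset.range (n + 1), (a j : ℂ) * w ^ j := by
    intro w
    rw [hPdef, Polynomial.eval_finset_sum]
    simp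
  have hcoeff : ∀ k, P.coeff k = if k ∈ Finset.range (n+1) then ((a k : ℂ)) else 0 := by
    intro k
    rw [hPdef, Polynomial.finset_sum_coeff]
    simp only [Polynomial.coeff_C_mul, Polynomial.coeff_X_pow, mul_ite, mul_one, mul_zero]
    exact Finset.sum_ite_eq (Finset.range (n+1)) k (fun j => (a j : ℂ))
  have hcn : P.coeff n = (a n : ℂ) := by rw [hcoeff]; simp
  have hdeg : P.natDegree = n := by
    apply le_antisymm
    · rw [Polynomial.natDegree_le_iff_coeff_eq_zero]
      intro N hN
      rw [hcoeff, if_neg (by simp [Finset.mem_range]; omega)]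
    · exact Polynomial.le_natDegree_of_ne_zero (by rw [hcn]; exact_mod_cast han)
  have hlead : P.leadingCoeff = (a n : ℂ) := by rw [Polynomial.leadingCoeff, hdeg, hcn]
  have hP0 : P ≠ 0 := by
    rw [← Polynomial.leadingCoeff_ne_zero, hlead]; exact_mod_cast han
  have hsplit : P.Splits := IsAlgClosed.splits P
  have hfact : ∀ w : ℂ, P.eval w = (a n : ℂ) * (P.roots.map (fun α => w - α)).prod := by
    intro w
    conv_lhs => rw [hsplit.eq_prod_roots]
    rw [Polynomial.eval_mul, Polynomial.eval_C, hlead, Polynomial.eval_multiset_prod,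
      Multiset.map_map]
    congr 1
    exact congrArg Multiset.prod (Multiset.map_congr rfl (fun α _ => by simp))
  have hroots1 : ∀ α ∈ P.roots, ‖α‖ ≠ 1 := by
    intro α hmem h1
    have hroot : P.eval α = 0 := Polynomial.isRoot_of_mem_roots hmem
    rw [heval] at hroot
    exact h3 α h1 hroot
  have hconj : P.roots.map (starRingEnd ℂ) = P.roots := by
    have hmap : P.map (starRingEnd ℂ) = P := by
      rw [hPdef, Polynomial.map_sum]
      apply Finset.sum_congr rfl
      intro j _
      rw [Polynomial.map_mul, Polynomial.map_C, Polynomial.map_pow, Polynomial.map_X,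
        Complex.conj_ofReal]
    rw [← hsplit.roots_map (starRingEnd ℂ), hmap]
  set bc : ℤ → ℂ := fun m => (P.roots.map (fun α => rootBeta α m)).sum with hbc
  have hbc_conj : ∀ m, (starRingEnd ℂ) (bc m) = bc m := by
    intro m
    rw [hbc]
    simp only
    rw [map_multiset_sum, Multiset.map_map]
    have h1 : (P.roots.map ((starRingEnd ℂ) ∘ fun α => rootBeta α m))
        = (P.roots.map (starRingEnd ℂ)).map (fun α => rootBeta α m) := by
      rw [Multiset.map_map]
      exact Multiset.map_congr rfl (fun α _ => rootBeta_conj α m)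
    rw [h1, hconj]
  set b : ℤ → ℝ := fun m => (bc m).re with hb
  have hreal : ∀ m, ((b m : ℝ) : ℂ) = bc m := fun m => Complex.conj_eq_iff_re.mp (hbc_conj m)
  have hb0 : b 0 = 0 := by
    have hz : bc 0 = 0 := by
      rw [hbc]
      simp only
      rw [Multiset.map_congr rfl (fun α _ => rootBeta_zero α)]
      simp
    show (bc 0).re = 0
    rw [hz]
    rfl
  have hbcsum : Summable (fun m => ‖bc m‖) :=
    multiset_summable_norm (fun α hm => rootBeta_norm_summable (hroots1 α hm))
  have hbsum : Summable (fun m => ‖b m‖) := by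
    apply hbcsum.congr
    intro m
    rw [← hreal m, Complex.norm_real]
  set R : ℝ := (P.roots.map rootChi).sum with hR
  refine ⟨b, hb0, hbsum, R, ?_⟩
  set S : ℝ → ℂ := fun z => (P.roots.map (fun α => Complex.log (1 - rootU α z))).sum with hSdef
  have hS : ∀ z : ℝ, HasSum (fun m : ℤ => bc m * Complex.exp (Complex.I * z * m)) (S z) := by
    intro z
    have h1 := multiset_hasSum (s := P.roots)
      (F := fun α m => rootBeta α m * Complex.exp (Complex.I * z * m))
      (g := fun α => Complex.log (1 - rootU α z))
      (fun α hm => rootBeta_hasSum (hroots1 α hm) z)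
    have he : (fun m : ℤ => (P.roots.map
          (fun α => rootBeta α m * Complex.exp (Complex.I * z * m))).sum)
        = fun m : ℤ => bc m * Complex.exp (Complex.I * z * m) := by
      funext m
      exact Multiset.sum_map_mul_right
    rw [he] at h1
    exact h1
  have hprod : ∀ z : ℝ, P.eval (Complex.exp (Complex.I * z)) =
      (a n : ℂ) * (P.roots.map rootD).prod * Complex.exp (Complex.I * R * z + S z) := by
    intro z
    rw [hfact]
    have h1 : P.roots.map (fun α => Complex.exp (Complex.I * z) - α)
        = P.roots.map (fun α => rootD α *
            Complex.exp (Complex.I * (rootChi α) * z + Complex.log (1 - rootU α z))) :=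
      Multiset.map_congr rfl (fun α hm => root_factor (hroots1 α hm) z)
    rw [h1, Multiset.prod_map_mul]
    have h2 : (P.roots.map (fun α =>
          Complex.exp (Complex.I * (rootChi α) * z + Complex.log (1 - rootU α z)))).prod
        = Complex.exp ((P.roots.map
            (fun α => Complex.I * (rootChi α) * z + Complex.log (1 - rootU α z))).sum) := by
      rw [Complex.exp_multiset_sum, Multiset.map_map]
      rfl
    rw [h2]
    have h4 : (P.roots.map
          (fun α => Complex.I * (rootChi α) * z + Complex.log (1 - rootU α z))).sum
        = Complex.I * R * z + S z := by
      rw [Multiset.sum_map_add]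
      congr 1
      have h5 : P.roots.map (fun α => Complex.I * (rootChi α) * (z:ℂ))
          = P.roots.map (fun α => ((rootChi α : ℝ) : ℂ) * (Complex.I * z)) :=
        Multiset.map_congr rfl (fun α _ => by ring)
      rw [h5, Multiset.sum_map_mul_right]
      have hcast : (P.roots.map (fun α => ((rootChi α : ℝ) : ℂ))).sum = ((R : ℝ) : ℂ) := by
        rw [hR, show (fun α => ((rootChi α : ℝ) : ℂ)) = ((Complex.ofRealHom : ℝ →+* ℂ) ∘ rootChi)
          from rfl, ← Multiset.map_map, ← map_multiset_sum]
        rfl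
      rw [hcast]
      ring
    rw [h4]
    ring
  have hS0' : HasSum bc (S 0) := by
    have h1 := hS 0
    have he : (fun m : ℤ => bc m * Complex.exp (Complex.I * (0:ℝ) * m)) = bc := by
      funext m
      simp
    rw [he] at h1
    exact h1
  have hone : (a n : ℂ) * (P.roots.map rootD).prod = Complex.exp (-(S 0)) := by
    have h0 := hprod 0
    have hval : P.eval (Complex.exp (Complex.I * (0:ℝ))) = 1 := by
      rw [heval]
      have : Complex.exp (Complex.I * (0:ℝ)) = 1 := by simp
      rw [this]
      simp only [one_pow, mul_one]
      rw [← Complex.ofReal_sum]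
      rw [hsum]
      simp
    rw [hval] at h0
    have he : Complex.I * R * ((0:ℝ):ℂ) + S 0 = S 0 := by simp
    rw [he] at h0
    rw [Complex.exp_neg]
    exact eq_inv_of_mul_eq_one_left h0.symm
  intro z
  rw [← heval, hprod z, hone, ← Complex.exp_add]
  congr 1
  have hsub : HasSum (fun m : ℤ => bc m * (Complex.exp (Complex.I * z * m) - 1)) (S z - S 0) := by
    have h1 := (hS z).sub hS0'
    have he : (fun m : ℤ => bc m * Complex.exp (Complex.I * z * m) - bc m)
        = fun m : ℤ => bc m * (Complex.exp (Complex.I * z * m) - 1) := by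
      funext m
      ring
    rw [he] at h1
    exact h1
  have ht : ∑' m : ℤ, (b m : ℂ) * (Complex.exp (Complex.I * z * m) - 1) = S z - S 0 := by
    rw [show (fun m : ℤ => (b m : ℂ) * (Complex.exp (Complex.I * z * m) - 1))
        = fun m : ℤ => bc m * (Complex.exp (Complex.I * z * m) - 1) from
      funext fun m => by rw [hreal m]]
    exact hsub.tsum_eq
  rw [ht]
  ring

lemma exp_I_meas (z : ℝ) : Measurable (fun x : ℝ => Complex.exp (Complex.I * z * x)) :=
  Complex.measurable_exp.comp (Complex.measurable_ofReal.const_mul (Complex.I * z))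

lemma gKer_meas {c : ℝ → ℝ} (hc : Measurable c) (z : ℝ) : Measurable (fun x => gKer c x z) := by
  have h1 : Measurable (fun x : ℝ =>
      (Complex.exp (Complex.I * z * x) - 1 - Complex.I * z * c x) * (((min 1 (x^2) : ℝ))⁻¹ : ℂ)) := by
    apply Measurable.mul
    · exact ((exp_I_meas z).sub measurable_const).sub
        ((Complex.measurable_ofReal.comp hc).const_mul (Complex.I * z))
    · exact (Complex.measurable_ofReal.comp
        (measurable_const.min (measurable_id.pow_const 2))).inv
  have h2 : (fun x => gKer c x z) = fun x : ℝ =>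
      if x = 0 then -(z:ℂ)^2 / 2
      else (Complex.exp (Complex.I * z * x) - 1 - Complex.I * z * c x)
        * (((min 1 (x^2) : ℝ))⁻¹ : ℂ) := by
    funext x
    rw [gKer]
    split_ifs with h
    · rfl
    · rw [div_eq_mul_inv]
  rw [h2]
  exact Measurable.ite (MeasurableSet.singleton 0) measurable_const h1

lemma charFn_eq (n : ℕ) (a : ℕ → ℝ) (hnn : ∀ j, j ≤ n → 0 ≤ a j)
    (μ : Measure ℝ)
    (hμ : μ = ∑ j ∈ Finset.range (n + 1), ENNReal.ofReal (a j) • Measure.dirac (j : ℝ)) (z : ℝ) :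
    charFn μ z = ∑ j ∈ Finset.range (n + 1), (a j : ℂ) * Complex.exp (Complex.I * z) ^ j := by
  have hint : ∀ j : ℕ, Integrable (fun x : ℝ => Complex.exp (Complex.I * z * x))
      (ENNReal.ofReal (a j) • Measure.dirac (j : ℝ)) := by
    intro j
    constructor
    · exact (exp_I_meas z).aestronglyMeasurable
    · rw [HasFiniteIntegral]
      rw [lintegral_smul_measure, lintegral_dirac]
      exact ENNReal.mul_lt_top ENNReal.ofReal_lt_top ENNReal.coe_lt_top
  rw [charFn, hμ, integral_finset_sum_measure (fun j _ => hint j)]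
  apply Finset.sum_congr rfl
  intro j hj
  rw [integral_smul_measure, integral_dirac]
  rw [ENNReal.toReal_ofReal (hnn j (Nat.lt_succ_iff.mp (Finset.mem_range.mp hj)))]
  rw [Complex.real_smul]
  congr 1
  rw [← Complex.exp_nat_mul]
  congr 1
  push_cast
  ring

lemma norm_exp_I_real (t s : ℝ) : ‖Complex.exp (Complex.I * t * s)‖ = 1 := by
  rw [Complex.norm_exp]
  simp

lemma gKer_bound_s8 {c : ℝ → ℝ} {M : ℝ} (hM : ∀ x, |c x| ≤ M) (z : ℝ) (m : ℤ) :
    ‖gKer c (m:ℝ) z‖ ≤ z^2/2 + (2 + |z| * M) := by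
  have hM0 : 0 ≤ M := le_trans (abs_nonneg _) (hM 0)
  have hzM : 0 ≤ |z| * M := mul_nonneg (abs_nonneg z) hM0
  by_cases hm : (m:ℝ) = 0
  · rw [gKer, if_pos hm]
    have : ‖-(z:ℂ)^2 / 2‖ = z^2/2 := by
      rw [norm_div, norm_neg, norm_pow, Complex.norm_real]
      simp [sq_abs]
    rw [this]
    linarith
  · have hm1 : (1:ℝ) ≤ |(m:ℝ)| := by
      have h1 : (1:ℤ) ≤ |m| := Int.one_le_abs (by exact_mod_cast hm)
      calc (1:ℝ) = ((1:ℤ):ℝ) := by norm_num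
        _ ≤ ((|m|:ℤ):ℝ) := by exact_mod_cast h1
        _ = |(m:ℝ)| := by push_cast; rfl
    have hmin : min 1 (((m:ℝ))^2) = 1 := by
      apply min_eq_left
      nlinarith [_root_.sq_abs ((m:ℝ))]
    rw [gKer, if_neg hm, hmin]
    rw [Complex.ofReal_one, div_one]
    calc ‖Complex.exp (Complex.I * z * (m:ℝ)) - 1 - Complex.I * z * c (m:ℝ)‖
        ≤ ‖Complex.exp (Complex.I * z * (m:ℝ)) - 1‖ + ‖Complex.I * z * c (m:ℝ)‖ :=
          norm_sub_le _ _
      _ ≤ (‖Complex.exp (Complex.I * z * (m:ℝ))‖ + ‖(1:ℂ)‖) + |z| * M := by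
          apply add_le_add (norm_sub_le _ _)
          rw [mul_assoc, norm_mul, Complex.norm_I, one_mul, norm_mul, Complex.norm_real,
            Complex.norm_real]
          exact mul_le_mul_of_nonneg_left (hM _) (abs_nonneg z)
      _ = 2 + |z| * M := by rw [norm_exp_I_real, norm_one]; norm_num
      _ ≤ z^2/2 + (2 + |z| * M) := by nlinarith [sq_nonneg z]

lemma intSum {c : ℝ → ℝ} (hcm : Measurable c) {M : ℝ} (hM : ∀ x, |c x| ≤ M)
    (d : ℤ → ℝ) (hd0 : ∀ m, 0 ≤ d m) (hds : Summable d) (z : ℝ) :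
    ∫ x, gKer c x z ∂(Measure.sum fun m : ℤ => ENNReal.ofReal (d m) • Measure.dirac ((m:ℝ)))
      = ∑' m : ℤ, d m • gKer c (m:ℝ) z := by
  set B := z^2/2 + (2 + |z| * M) with hB
  have hB0 : 0 ≤ B := le_trans (norm_nonneg _) (gKer_bound_s8 hM z 0)
  have hfin : HasFiniteIntegral (fun x => gKer c x z)
      (Measure.sum fun m : ℤ => ENNReal.ofReal (d m) • Measure.dirac ((m:ℝ))) := by
    rw [HasFiniteIntegral, lintegral_sum_measure]
    have h1 : ∀ m : ℤ, ∫⁻ x, ‖gKer c x z‖₊ ∂(ENNReal.ofReal (d m) • Measure.dirac ((m:ℝ)))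
        = ENNReal.ofReal (d m) * ‖gKer c (m:ℝ) z‖₊ := by
      intro m
      rw [lintegral_smul_measure, lintegral_dirac, smul_eq_mul]
    calc (∑' m : ℤ, ∫⁻ x, ‖gKer c x z‖₊ ∂(ENNReal.ofReal (d m) • Measure.dirac ((m:ℝ))))
        = ∑' m : ℤ, ENNReal.ofReal (d m) * ‖gKer c (m:ℝ) z‖₊ := tsum_congr h1
      _ ≤ ∑' m : ℤ, ENNReal.ofReal (d m) * ENNReal.ofReal B := by
          apply ENNReal.tsum_le_tsum
          intro m
          apply mul_le_mul_right
          rw [show ((‖gKer c (m:ℝ) z‖₊ : ℝ≥0∞)) = ENNReal.ofReal ‖gKer c (m:ℝ) z‖ from (ofReal_norm _).symm]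
          exact ENNReal.ofReal_le_ofReal (gKer_bound_s8 hM z m)
      _ = (∑' m : ℤ, ENNReal.ofReal (d m)) * ENNReal.ofReal B := ENNReal.tsum_mul_right
      _ < ⊤ := by
          apply ENNReal.mul_lt_top _ ENNReal.ofReal_lt_top
          have h2 : ∀ m : ℤ, ENNReal.ofReal (d m) = (‖d m‖₊ : ℝ≥0∞) := by
            intro m
            rw [show ((‖d m‖₊ : ℝ≥0∞)) = ENNReal.ofReal ‖d m‖ from (ofReal_norm _).symm, Real.norm_eq_abs, _root_.abs_of_nonneg (hd0 m)]
          rw [tsum_congr h2]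
          rw [lt_top_iff_ne_top]
          rw [ENNReal.tsum_coe_ne_top_iff_summable]
          rw [← NNReal.summable_coe]
          simpa [coe_nnnorm] using hds.abs
  have hInt : Integrable (fun x => gKer c x z)
      (Measure.sum fun m : ℤ => ENNReal.ofReal (d m) • Measure.dirac ((m:ℝ))) :=
    ⟨(gKer_meas hcm z).aestronglyMeasurable, hfin⟩
  rw [integral_sum_measure hInt]
  apply tsum_congr
  intro m
  rw [integral_smul_measure, integral_dirac, ENNReal.toReal_ofReal (hd0 m)]

lemma one_le_sq_int {m : ℤ} (hm : m ≠ 0) : min 1 (((m:ℝ))^2) = 1 := by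
  apply min_eq_left
  have h1 : (1:ℤ) ≤ |m| := Int.one_le_abs (by exact_mod_cast hm)
  have h2 : (1:ℝ) ≤ |(m:ℝ)| := by
    calc (1:ℝ) = ((1:ℤ):ℝ) := by norm_num
      _ ≤ ((|m|:ℤ):ℝ) := by exact_mod_cast h1
      _ = |(m:ℝ)| := by push_cast; rfl
  nlinarith [_root_.sq_abs ((m:ℝ))]

lemma gKer_int (c : ℝ → ℝ) (z : ℝ) {m : ℤ} (hm : m ≠ 0) :
    gKer c (m:ℝ) z = Complex.exp (Complex.I * z * (m:ℂ)) - 1 - Complex.I * z * c (m:ℝ) := by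
  have hmr : ((m:ℝ)) ≠ 0 := Int.cast_ne_zero.mpr hm
  rw [gKer, if_neg hmr, one_le_sq_int hm]
  rw [Complex.ofReal_one, div_one]
  norm_cast

lemma norm_exp_I_real' (t s : ℝ) : ‖Complex.exp (Complex.I * t * s)‖ = 1 := by
  rw [Complex.norm_exp]
  simp

/-- for μ = ∑_{j=0}^n a_j δ_j with a_n > 0, TFAE:
(i) μ is quasi-infinitely divisible; (ii) μ̂ has no zeroes;
(iii) the polynomial ∑ a_j w^j has no roots on the unit circle. -/
theorem stmt8 (c : ℝ → ℝ) (hc : IsRepFn c) (n : ℕ) (a : ℕ → ℝ)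
    (hnn : ∀ j, j ≤ n → 0 ≤ a j) (han : 0 < a n)
    (hsum : ∑ j ∈ Finset.range (n + 1), a j = 1)
    (μ : Measure ℝ)
    (hμ : μ = ∑ j ∈ Finset.range (n + 1), ENNReal.ofReal (a j) • Measure.dirac (j : ℝ)) :
    List.TFAE [IsQID c μ,
      ∀ z : ℝ, charFn μ z ≠ 0,
      ∀ w : ℂ, ‖w‖ = 1 → ∑ j ∈ Finset.range (n + 1), (a j : ℂ) * w ^ j ≠ 0] := by
  tfae_have 1 → 2 := by
    intro h z
    obtain ⟨γ, ζp, ζm, _, _, _, hr⟩ := h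
    rw [hr z]
    exact Complex.exp_ne_zero _
  tfae_have 2 → 3 := by
    intro h2 w hw hcon
    have hw' : Complex.exp (Complex.I * (w.arg : ℝ)) = w := by
      have h := Complex.norm_mul_exp_arg_mul_I w
      rw [hw, Complex.ofReal_one, one_mul] at h
      rw [mul_comm]
      exact h
    apply h2 w.arg
    rw [charFn_eq n a hnn μ hμ w.arg, hw']
    exact hcon
  tfae_have 3 → 1 := by
    intro h3
    obtain ⟨hcm, ⟨M, hM⟩, -⟩ := hc
    obtain ⟨b, hb0, hbnorm, R, hkey⟩ := keyIdentity n a (ne_of_gt han) hsum h3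
    set bp : ℤ → ℝ := fun m => max (b m) 0 with hbp
    set bm : ℤ → ℝ := fun m => max (-(b m)) 0 with hbm
    have hbp0 : ∀ m, 0 ≤ bp m := fun m => le_max_right _ _
    have hbm0 : ∀ m, 0 ≤ bm m := fun m => le_max_right _ _
    have hbple : ∀ m, bp m ≤ ‖b m‖ := fun m =>
      max_le (le_abs_self _) (abs_nonneg _)
    have hbmle : ∀ m, bm m ≤ ‖b m‖ := fun m =>
      max_le (by rw [Real.norm_eq_abs, abs_eq_max_neg]; exact le_max_right _ _) (norm_nonneg _)
    have hbps : Summable bp := Summable.of_nonneg_of_le hbp0 hbple hbnorm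
    have hbms : Summable bm := Summable.of_nonneg_of_le hbm0 hbmle hbnorm
    have hfinm : ∀ (d : ℤ → ℝ), Summable d → (∀ m, 0 ≤ d m) →
        IsFiniteMeasure (Measure.sum (fun m : ℤ => ENNReal.ofReal (d m) • Measure.dirac ((m:ℝ)))) := by
      intro d hds hd0
      constructor
      rw [Measure.sum_apply _ MeasurableSet.univ]
      have he : ∀ m : ℤ, (ENNReal.ofReal (d m) • Measure.dirac ((m:ℝ))) Set.univ
          = ENNReal.ofReal (d m) := by
        intro m
        rw [Measure.smul_apply, measure_univ, smul_eq_mul, mul_one]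
      rw [tsum_congr he]
      have h2 : ∀ m : ℤ, ENNReal.ofReal (d m) = ((‖d m‖₊ : ℝ≥0) : ℝ≥0∞) := by
        intro m
        rw [show ((‖d m‖₊ : ℝ≥0∞)) = ENNReal.ofReal ‖d m‖ from (ofReal_norm _).symm, Real.norm_eq_abs, _root_.abs_of_nonneg (hd0 m)]
      rw [tsum_congr h2, lt_top_iff_ne_top, ENNReal.tsum_coe_ne_top_iff_summable,
        ← NNReal.summable_coe]
      simpa [coe_nnnorm] using hds.abs
    refine ⟨R + ∑' m : ℤ, b m * c ((m:ℝ)),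
      Measure.sum (fun m : ℤ => ENNReal.ofReal (bp m) • Measure.dirac ((m:ℝ))),
      Measure.sum (fun m : ℤ => ENNReal.ofReal (bm m) • Measure.dirac ((m:ℝ))),
      hfinm bp hbps hbp0, hfinm bm hbms hbm0, ?_, ?_⟩
    · -- mutual singularity
      set s : Set ℝ := (fun m : ℤ => (m:ℝ)) '' {m : ℤ | 0 < b m} with hs
      have hsm : MeasurableSet s := (Set.Countable.image (Set.to_countable _) _).measurableSet
      refine ⟨sᶜ, hsm.compl, ?_, ?_⟩
      · rw [Measure.sum_apply _ hsm.compl]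
        apply ENNReal.tsum_eq_zero.mpr
        intro m
        rw [Measure.smul_apply]
        rcases le_or_gt (b m) 0 with h | h
        · rw [show bp m = 0 from max_eq_right h, ENNReal.ofReal_zero, zero_smul]
        · have hmem : (m:ℝ) ∈ s := ⟨m, h, rfl⟩
          rw [Measure.dirac_apply' _ hsm.compl, Set.indicator_of_notMem (by simpa using hmem),
            smul_zero]
      · rw [compl_compl, Measure.sum_apply _ hsm]
        apply ENNReal.tsum_eq_zero.mpr
        intro m
        rw [Measure.smul_apply]
        rcases lt_or_ge 0 (b m) with h | h
        · rw [show bm m = 0 from max_eq_right (neg_nonpos.mpr h.le), ENNReal.ofReal_zero,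
            zero_smul]
        · have hmem : (m:ℝ) ∉ s := by
            rintro ⟨m', hm', he⟩
            have hmm : ((m':ℤ):ℝ) = ((m:ℤ):ℝ) := he
            have : m' = m := by exact_mod_cast hmm
            subst this
            exact absurd hm' (not_lt.mpr h)
          rw [Measure.dirac_apply' _ hsm, Set.indicator_of_notMem hmem, smul_zero]
    · -- the representation
      intro z
      rw [charFn_eq n a hnn μ hμ z, hkey z]
      rw [intSum hcm hM bp hbp0 hbps z, intSum hcm hM bm hbm0 hbms z]
      congr 1
      set B := z^2/2 + (2 + |z| * M) with hB
      have hgb : ∀ m : ℤ, ‖gKer c ((m:ℝ)) z‖ ≤ B := gKer_bound_s8 hM z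
      have hB0 : 0 ≤ B := le_trans (norm_nonneg _) (hgb 0)
      have h5 : Summable (fun m : ℤ => bp m • gKer c ((m:ℝ)) z) := by
        apply Summable.of_norm_bounded (hbnorm.mul_right B)
        intro m
        rw [norm_smul, Real.norm_eq_abs, _root_.abs_of_nonneg (hbp0 m)]
        exact mul_le_mul (hbple m) (hgb m) (norm_nonneg _) (norm_nonneg _)
      have h6 : Summable (fun m : ℤ => bm m • gKer c ((m:ℝ)) z) := by
        apply Summable.of_norm_bounded (hbnorm.mul_right B)
        intro m
        rw [norm_smul, Real.norm_eq_abs, _root_.abs_of_nonneg (hbm0 m)]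
        exact mul_le_mul (hbmle m) (hgb m) (norm_nonneg _) (norm_nonneg _)
      have hsub : (∑' m : ℤ, bp m • gKer c ((m:ℝ)) z) - ∑' m : ℤ, bm m • gKer c ((m:ℝ)) z
          = ∑' m : ℤ, b m • gKer c ((m:ℝ)) z := by
        rw [← Summable.tsum_sub h5 h6]
        apply tsum_congr
        intro m
        rw [← sub_smul, hbp, hbm]
        simp only
        rw [max_zero_sub_max_neg_zero_eq_self]
      have hexp1 : ∀ m : ℤ, ‖Complex.exp (Complex.I * z * (m:ℂ))‖ = 1 := by
        intro m
        rw [show ((m:ℤ):ℂ) = (((m:ℝ)):ℂ) by push_cast; rfl]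
        exact norm_exp_I_real' z (m:ℝ)
      have hs1 : Summable (fun m : ℤ => (b m : ℂ) * (Complex.exp (Complex.I * z * (m:ℂ)) - 1)) := by
        apply Summable.of_norm_bounded (hbnorm.mul_right 2)
        intro m
        rw [norm_mul, Complex.norm_real]
        apply mul_le_mul_of_nonneg_left _ (norm_nonneg _)
        calc ‖Complex.exp (Complex.I * z * (m:ℂ)) - 1‖
            ≤ ‖Complex.exp (Complex.I * z * (m:ℂ))‖ + ‖(1:ℂ)‖ := norm_sub_le _ _
          _ = 2 := by rw [hexp1 m, norm_one]; norm_num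
      have hs2 : Summable (fun m : ℤ => Complex.I * z * ((b m * c ((m:ℝ)) : ℝ) : ℂ)) := by
        apply Summable.of_norm_bounded (hbnorm.mul_right (|z| * M))
        intro m
        rw [norm_mul, norm_mul, Complex.norm_I, one_mul, Complex.norm_real, Complex.norm_real,
          Real.norm_eq_abs, Real.norm_eq_abs, abs_mul, Real.norm_eq_abs]
        have h1 := hM ((m:ℝ))
        have h2 := abs_nonneg (b m)
        have h3 := abs_nonneg z
        calc |z| * (|b m| * |c ((m:ℝ))|) = (|b m| * |z|) * |c ((m:ℝ))| := by ring
          _ ≤ (|b m| * |z|) * M := mul_le_mul_of_nonneg_left h1 (mul_nonneg h2 h3)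
          _ = |b m| * (|z| * M) := by ring
      have hpt : ∀ m : ℤ, b m • gKer c ((m:ℝ)) z
          = (b m : ℂ) * (Complex.exp (Complex.I * z * (m:ℂ)) - 1)
            - Complex.I * z * ((b m * c ((m:ℝ)) : ℝ) : ℂ) := by
        intro m
        by_cases hm : m = 0
        · subst hm
          rw [hb0]
          simp
        · rw [gKer_int c z hm, Complex.real_smul]
          push_cast
          ring
      have hT : ∑' m : ℤ, Complex.I * z * ((b m * c ((m:ℝ)) : ℝ) : ℂ)
          = Complex.I * z * ((∑' m : ℤ, b m * c ((m:ℝ)) : ℝ) : ℂ) := by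
        rw [tsum_mul_left, Complex.ofReal_tsum]
      rw [add_sub_assoc, hsub, tsum_congr hpt, Summable.tsum_sub hs1 hs2, hT]
      push_cast
      ring
  tfae_finish


end
end
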